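/- arXiv:2207.04525 — 8 statements merged into one kernel-verified Lean document; each statement's English description precedes it below -/
import Mathlib

section
/- For all real constants a, b, c > 0 and every symmetric traceless real 3×3 matrix Q, the bulk potential satisfies f_b(Q) ≥ 0, and f_b(Q) = 0 if and only if Q = s₊(n⊗n − (1/3)Id) for some unit vector n ∈ S², i.e. if and only if Q belongs to 𝒩. -/
open MeasureTheory Matrix Metric Filter
open scoped RealInnerProductSpace

noncomputable section

attribute [local instance] Matrix.frobeniusNormedAddCommGroup Matrix.frobeniusNormedSpace

/-- The space of real 3×3 matrices. -/
abbrev Mat3 := Matrix (Fin 3) (Fin 3) ℝ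

/-- Euclidean 3-space. -/
abbrev E3 := EuclideanSpace ℝ (Fin 3)

/-- The constant `s₊ = (b² + √(b⁴ + 24a²c²))/(4c²)`. -/
def sPlus (a b c : ℝ) : ℝ := (b ^ 2 + Real.sqrt (b ^ 4 + 24 * a ^ 2 * c ^ 2)) / (4 * c ^ 2)

/-- The matrix `n ⊗ n`, with entries `nᵢnⱼ`. -/
def outer (n : Fin 3 → ℝ) : Mat3 := fun i j => n i * n j

/-- The vacuum manifold `𝒩 = { s₊(n⊗n − (1/3)Id) : n ∈ S² }`. -/
def Nset (a b c : ℝ) : Set Mat3 :=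
  {Q | ∃ n : Fin 3 → ℝ, (∑ i, n i ^ 2) = 1 ∧
    Q = sPlus a b c • (outer n - (1 / 3 : ℝ) • (1 : Mat3))}

/-- Squared Frobenius norm `tr(AAᵀ) = ∑ᵢⱼ Aᵢⱼ²`. -/
def frobSq (A : Mat3) : ℝ := ∑ i, ∑ j, (A i j) ^ 2

/-- Frobenius norm. -/
def frob (A : Mat3) : ℝ := Real.sqrt (frobSq A)

/-- The additive normalization constant `C₀ = a²s₊²/3 + 2b²s₊³/27 − c²s₊⁴/9`. -/
def C0 (a b c : ℝ) : ℝ :=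
  a ^ 2 * (sPlus a b c) ^ 2 / 3 + 2 * b ^ 2 * (sPlus a b c) ^ 3 / 27
    - c ^ 2 * (sPlus a b c) ^ 4 / 9

/-- The bulk potential `f_b(Q)`. -/
def fb (a b c : ℝ) (Q : Mat3) : ℝ :=
  -(a ^ 2 / 2) * (Q * Q).trace - (b ^ 2 / 3) * (Q * Q * Q).trace
    + (c ^ 2 / 4) * ((Q * Q).trace) ^ 2 + C0 a b c

/-- Frobenius distance from `Q` to the manifold `𝒩`. -/
def distN (a b c : ℝ) (Q : Mat3) : ℝ := sInf {d : ℝ | ∃ N ∈ Nset a b c, d = frob (Q - N)}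

/-- Partial derivative `∂_α Q(x)` of a matrix-valued map. -/
def pd (Q : E3 → Mat3) (α : Fin 3) (x : E3) : Mat3 :=
  fderiv ℝ Q x (EuclideanSpace.single α 1)

/-- `|∇Q(x)|² = ∑_α |∂_αQ(x)|²` (Frobenius norms). -/
def gradSq (Q : E3 → Mat3) (x : E3) : ℝ := ∑ α, frobSq (pd Q α x)

/-- Radial derivative `(∂Q/∂r)(x) = ∑_α (x_α/|x|) ∂_αQ(x)`. -/
def radD (Q : E3 → Mat3) (x : E3) : Mat3 := ‖x‖⁻¹ • ∑ α, (x α) • pd Q α x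

/-- Componentwise Laplacian `ΔQ(x)`. -/
def lap (Q : E3 → Mat3) (x : E3) : Mat3 :=
  ∑ α, fderiv ℝ (fun y => pd Q α y) x (EuclideanSpace.single α 1)

/-- The Landau–de Gennes energy density `e_ε(Q) = ½|∇Q|² + ε⁻²f_b(Q)`. -/
def eDen (a b c ε : ℝ) (Q : E3 → Mat3) (x : E3) : ℝ :=
  gradSq Q x / 2 + (ε ^ 2)⁻¹ * fb a b c (Q x)

/-- `Q` is a local minimizer of `I_ε(·, U)`: its energy density is locally integrable on `U`
and it minimizes the energy on every bounded open `D` with closure in `U` among competitors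
with locally integrable energy density agreeing with `Q` outside a compact subset of `D`. -/
def IsLocalMinimizer (a b c ε : ℝ) (U : Set E3) (Q : E3 → Mat3) : Prop :=
  LocallyIntegrableOn (eDen a b c ε Q) U volume ∧
  ∀ D : Set E3, IsOpen D → Bornology.IsBounded D → closure D ⊆ U →
    ∀ V : E3 → Mat3, LocallyIntegrableOn (eDen a b c ε V) U volume →
      (∃ K : Set E3, K ⊆ D ∧ IsCompact K ∧ ∀ x ∈ U \ K, V x = Q x) →
      ∫ x in D, eDen a b c ε Q x ≤ ∫ x in D, eDen a b c ε V x


section AuxLdG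

private lemma cubic_id' (x y z : ℝ) (h : x + y + z = 0) :
    (x^2+y^2+z^2)^3 - 6*(x^3+y^3+z^3)^2 = 2*((x-y)*(y-z)*(z-x))^2 := by
  have hz : z = -x - y := by linarith
  subst hz; ring

private lemma quart_id' (a b c t s : ℝ) (hq : 2*c^2*t^2 = b^2*t + 3*a^2) :
    27*t*(-(a^2*s^2/3) - 2*b^2*s^3/27 + c^2*s^4/9
        + (a^2*t^2/3 + 2*b^2*t^3/27 - c^2*t^4/9))
      = (s-t)^2*(3*c^2*t*s^2 + (2*c^2*t^2+6*a^2)*s + (c^2*t^2+3*a^2)*t) := by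
  linear_combination (2*(s^3 - t^3)) * hq

private lemma cube_solve' (t x : ℝ) (ht : 0 < t) (h2 : x^2 = t^2/9) (h3 : x^3 = -(t^3)/27) :
    x = -t/3 := by
  have key : (x + t/3) * t^2 = 0 := by linear_combination (-9*x)*h2 + 9*h3
  rcases mul_eq_zero.1 key with h | h
  · linarith
  · exact absurd h (by positivity)

private lemma eig_classify' (t x y z : ℝ) (ht : 0 < t) (h0 : x+y+z=0)
    (h2 : x^2+y^2+z^2 = 2*t^2/3) (h3 : x^3+y^3+z^3 = 2*t^3/9)
    (hd : (x-y)*(y-z)*(z-x) = 0) :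
    (x = 2*t/3 ∧ y = -t/3 ∧ z = -t/3) ∨ (y = 2*t/3 ∧ x = -t/3 ∧ z = -t/3)
      ∨ (z = 2*t/3 ∧ x = -t/3 ∧ y = -t/3) := by
  rcases mul_eq_zero.1 hd with hd | hzx
  · rcases mul_eq_zero.1 hd with hxy | hyz
    · have hxy : x = y := by linarith [sub_eq_zero.1 hxy]
      subst hxy
      have hz : z = -(2*x) := by linarith
      subst hz
      have hx : x = -t/3 := cube_solve' t x ht (by nlinarith) (by nlinarith)
      exact Or.inr (Or.inr ⟨by linarith, hx, hx⟩)
    · have hyz : y = z := by linarith [sub_eq_zero.1 hyz]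
      subst hyz
      have hx : x = -(2*y) := by linarith
      subst hx
      have hy : y = -t/3 := cube_solve' t y ht (by nlinarith) (by nlinarith)
      exact Or.inl ⟨by linarith, hy, hy⟩
  · have hzx : z = x := by linarith [sub_eq_zero.1 hzx]
    subst hzx
    have hy : y = -(2*z) := by linarith
    subst hy
    have hz : z = -t/3 := cube_solve' t z ht (by nlinarith) (by nlinarith)
    exact Or.inr (Or.inl ⟨by linarith, hz, hz⟩)

private lemma le_of_sq_le_sq' (e B : ℝ) (hB : 0 ≤ B) (h : e^2 ≤ B^2) : e ≤ B := by
  nlinarith [sq_nonneg (e - B), sq_nonneg (e + B)]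

private lemma sPlus_pos' (a b c : ℝ) (ha : 0 < a) (hb : 0 < b) (hc : 0 < c) :
    0 < sPlus a b c := by
  have : 0 < Real.sqrt (b ^ 4 + 24 * a ^ 2 * c ^ 2) := Real.sqrt_pos.2 (by positivity)
  rw [sPlus]
  positivity

private lemma sPlus_quad' (a b c : ℝ) (ha : 0 < a) (hb : 0 < b) (hc : 0 < c) :
    2*c^2*(sPlus a b c)^2 = b^2*(sPlus a b c) + 3*a^2 := by
  have h : Real.sqrt (b ^ 4 + 24 * a ^ 2 * c ^ 2) ^ 2 = b ^ 4 + 24 * a ^ 2 * c ^ 2 :=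
    Real.sq_sqrt (by positivity)
  have hc2 : (c:ℝ)^2 ≠ 0 := by positivity
  rw [sPlus]
  field_simp
  nlinarith [h, Real.sq_sqrt (show (0:ℝ) ≤ b ^ 4 + c ^ 2 * 24 * a ^ 2 by positivity)]

private lemma traces' (Q : Mat3) (hH : Q.IsHermitian) :
    Q.trace = hH.eigenvalues 0 + hH.eigenvalues 1 + hH.eigenvalues 2 ∧
    (Q*Q).trace = (hH.eigenvalues 0)^2 + (hH.eigenvalues 1)^2 + (hH.eigenvalues 2)^2 ∧
    (Q*Q*Q).trace = (hH.eigenvalues 0)^3 + (hH.eigenvalues 1)^3 + (hH.eigenvalues 2)^3 := by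
  set U : Mat3 := (hH.eigenvectorUnitary : Mat3) with hUdef
  set μ : Fin 3 → ℝ := hH.eigenvalues with hμdef
  have hU1 : star U * U = 1 := mem_unitaryGroup_iff'.mp hH.eigenvectorUnitary.2
  have hspec : Q = U * diagonal μ * star U := by
    simpa [RCLike.ofReal_real_eq_id] using hH.spectral_theorem
  have key : ∀ A B : Mat3, (U*A*star U) * (U*B*star U) = U*(A*B)*star U := by
    intro A B
    calc (U*A*star U) * (U*B*star U) = U*A*(star U * U)*(B*star U) := by
          simp only [Matrix.mul_assoc]
      _ = U*(A*B)*star U := by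
          rw [hU1]; simp only [Matrix.mul_assoc, Matrix.mul_one, Matrix.one_mul]
  have htrc : ∀ A : Mat3, (U*A*star U).trace = A.trace := by
    intro A
    rw [Matrix.trace_mul_comm, ← Matrix.mul_assoc, hU1, Matrix.one_mul]
  refine ⟨?_, ?_, ?_⟩
  · rw [hspec, htrc, Matrix.trace_diagonal, Fin.sum_univ_three]
  · rw [hspec, key, Matrix.diagonal_mul_diagonal, htrc, Matrix.trace_diagonal,
      Fin.sum_univ_three]
    ring
  · rw [hspec, key, key, Matrix.diagonal_mul_diagonal, Matrix.diagonal_mul_diagonal, htrc,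
      Matrix.trace_diagonal, Fin.sum_univ_three]
    ring

private lemma reconstruct' (Q : Mat3) (hH : Q.IsHermitian) (t : ℝ) (k : Fin 3)
    (hμ : ∀ p, hH.eigenvalues p = -t/3 + (if p = k then t else 0)) :
    ∃ n : Fin 3 → ℝ, (∑ i, n i ^ 2) = 1 ∧ Q = t • (outer n - (1/3 : ℝ) • (1 : Mat3)) := by
  set U : Mat3 := (hH.eigenvectorUnitary : Mat3) with hUdef
  set μ : Fin 3 → ℝ := hH.eigenvalues with hμdef
  have hU1 : star U * U = 1 := mem_unitaryGroup_iff'.mp hH.eigenvectorUnitary.2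
  have hU2 : U * star U = 1 := mem_unitaryGroup_iff.mp hH.eigenvectorUnitary.2
  have hspec : Q = U * diagonal μ * star U := by
    simpa [RCLike.ofReal_real_eq_id] using hH.spectral_theorem
  refine ⟨fun i => U i k, ?_, ?_⟩
  · have := congr_fun (congr_fun hU1 k) k
    simpa [Matrix.mul_apply, Fin.sum_univ_three, Matrix.star_apply, Matrix.one_apply, sq]
      using this
  · ext i j
    have hone : ∑ q, U i q * U j q = (1:Mat3) i j := by
      have := congr_fun (congr_fun hU2 i) j
      simpa [Matrix.mul_apply, Matrix.star_apply] using this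
    rw [hspec]
    have expand : (U * diagonal μ * star U) i j = ∑ q, U i q * μ q * U j q := by
      rw [Matrix.mul_apply]
      refine Finset.sum_congr rfl fun q _ => ?_
      rw [Matrix.mul_diagonal, Matrix.star_apply]
      simp
    rw [expand]
    have step : ∀ q : Fin 3, U i q * μ q * U j q
        = (-t/3) * (U i q * U j q) + (if q = k then t * (U i k * U j k) else 0) := by
      intro q
      by_cases hqk : q = k
      · subst hqk; rw [hμ q]; simp; ring
      · rw [hμ q]; simp [hqk]; ring
    rw [Finset.sum_congr rfl (fun q _ => step q), Finset.sum_add_distrib, ← Finset.mul_sum,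
      Finset.sum_ite_eq' Finset.univ k, hone]
    simp only [Finset.mem_univ, if_true, Matrix.smul_apply, Matrix.sub_apply, outer,
      Matrix.smul_apply, smul_eq_mul]
    ring

private lemma memb_traces' (n : Fin 3 → ℝ) (hn : (∑ i, n i ^ 2) = 1) (t : ℝ)
    (Q : Mat3) (hQ : Q = t • (outer n - (1/3 : ℝ) • (1 : Mat3))) :
    (Q*Q).trace = 2*t^2/3 ∧ (Q*Q*Q).trace = 2*t^3/9 := by
  set P : Mat3 := outer n with hP
  have hPP : P * P = P := by
    ext i j
    simp only [Matrix.mul_apply, hP, outer]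
    calc ∑ q, n i * n q * (n q * n j) = (n i * n j) * ∑ q, n q ^2 := by
          rw [Finset.mul_sum]; exact Finset.sum_congr rfl fun q _ => by ring
      _ = n i * n j := by rw [hn, mul_one]
  have hPtr : P.trace = 1 := by
    simp only [Matrix.trace, Matrix.diag, hP, outer]
    rw [← hn]; exact Finset.sum_congr rfl fun q _ => (sq (n q)).symm
  have hQ2 : Q * Q = (t^2 * (1/3)) • P + (t^2 * (1/9)) • (1 : Mat3) := by
    rw [hQ]
    rw [Matrix.smul_mul, Matrix.mul_smul, sub_mul, mul_sub, mul_sub, hPP]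
    simp only [Matrix.smul_mul, Matrix.mul_smul, Matrix.mul_one, Matrix.one_mul, smul_smul]
    module
  have hQ3 : Q * Q * Q = (t^3 * (1/3)) • P - (t^3 * (1/27)) • (1 : Mat3) := by
    rw [hQ2, hQ]
    simp only [Matrix.smul_mul, Matrix.mul_smul, add_mul, mul_sub, sub_mul, Matrix.mul_one,
      Matrix.one_mul, hPP, smul_smul, smul_sub, smul_add]
    module
  constructor
  · rw [hQ2]
    simp [Matrix.trace_add, Matrix.trace_smul, hPtr, Matrix.trace_one]
    ring
  · rw [hQ3]
    simp [Matrix.trace_sub, Matrix.trace_smul, hPtr, Matrix.trace_one]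
    ring

end AuxLdG

set_option maxHeartbeats 1600000 in
/-- for `a,b,c > 0` and every symmetric traceless `Q`, the bulk potential
satisfies `f_b(Q) ≥ 0`, with equality iff `Q ∈ 𝒩`. -/
theorem stmt0 (a b c : ℝ) (ha : 0 < a) (hb : 0 < b) (hc : 0 < c)
    (Q : Mat3) (hsym : Q.IsSymm) (htr : Q.trace = 0) :
    0 ≤ fb a b c Q ∧ (fb a b c Q = 0 ↔ Q ∈ Nset a b c) := by
  have hH : Q.IsHermitian := by
    rwa [Matrix.IsHermitian, conjTranspose_eq_transpose_of_trivial]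
  obtain ⟨t, htdef⟩ : ∃ v, v = sPlus a b c := ⟨_, rfl⟩
  have ht : 0 < t := htdef ▸ sPlus_pos' a b c ha hb hc
  have hq : 2*c^2*t^2 = b^2*t + 3*a^2 := by rw [htdef]; exact sPlus_quad' a b c ha hb hc
  obtain ⟨htr1, htr2, htr3⟩ := traces' Q hH
  obtain ⟨x, hx⟩ : ∃ v, v = hH.eigenvalues 0 := ⟨_, rfl⟩
  obtain ⟨y, hy⟩ : ∃ v, v = hH.eigenvalues 1 := ⟨_, rfl⟩
  obtain ⟨z, hz⟩ : ∃ v, v = hH.eigenvalues 2 := ⟨_, rfl⟩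
  rw [← hx, ← hy, ← hz] at htr1 htr2 htr3
  have hsum : x + y + z = 0 := by rw [← htr1]; exact htr
  obtain ⟨s, hsdef⟩ : ∃ v, v = Real.sqrt (3*(x^2+y^2+z^2)/2) := ⟨_, rfl⟩
  have hs0 : 0 ≤ s := hsdef ▸ Real.sqrt_nonneg _
  have hs2 : s^2 = 3*(x^2+y^2+z^2)/2 := by
    rw [hsdef]; exact Real.sq_sqrt (by positivity)
  have hps : x^2+y^2+z^2 = 2*s^2/3 := by linarith
  have hdisc := cubic_id' x y z hsum
  have hC0 : C0 a b c = a^2*t^2/3 + 2*b^2*t^3/27 - c^2*t^4/9 := by rw [htdef]; rfl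
  have hid := quart_id' a b c t s hq
  obtain ⟨W, hWdef⟩ : ∃ v, v = 3*c^2*t*s^2 + (2*c^2*t^2+6*a^2)*s + (c^2*t^2+3*a^2)*t :=
    ⟨_, rfl⟩
  have hW : 0 < W := by
    have h1 : 0 ≤ 3*c^2*t*s^2 := by positivity
    have h2 : 0 ≤ (2*c^2*t^2+6*a^2)*s := by positivity
    have h3 : 0 < (c^2*t^2+3*a^2)*t := by positivity
    rw [hWdef]; linarith
  have h27 : (27:ℝ)*t ≠ 0 := by positivity
  have he_le : x^3+y^3+z^3 ≤ 2*s^3/9 := by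
    have h6 : 6*(x^3+y^3+z^3)^2 ≤ (x^2+y^2+z^2)^3 :=
      by linarith [hdisc, sq_nonneg ((x-y)*(y-z)*(z-x))]
    rw [hps] at h6
    have hB : (0:ℝ) ≤ 2*s^3/9 := by positivity
    exact le_of_sq_le_sq' _ _ hB (by linarith [h6])
  have hdiv : ((s-t)^2 * W)/(27*t)
      = -(a^2*s^2/3) - 2*b^2*s^3/27 + c^2*s^4/9 + C0 a b c := by
    rw [div_eq_iff h27, hC0, hWdef]
    linear_combination hid + 4*(t^3-s^3)*hq
  have hmain : fb a b c Q = (b^2/3)*(2*s^3/9 - (x^3+y^3+z^3)) + ((s-t)^2 * W)/(27*t) := by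
    rw [fb, htr2, htr3, hps, hdiv]
    ring
  have hterm1 : 0 ≤ (b^2/3)*(2*s^3/9 - (x^3+y^3+z^3)) := by
    have h0 : 0 ≤ 2*s^3/9 - (x^3+y^3+z^3) := by linarith
    positivity
  have hterm2 : 0 ≤ ((s-t)^2 * W)/(27*t) := by positivity
  refine ⟨by rw [hmain]; linarith, ?_, ?_⟩
  · -- fb = 0 → Q ∈ Nset
    intro hfb0
    rw [hmain] at hfb0
    have hz2 : ((s-t)^2 * W)/(27*t) = 0 := by linarith
    have hst : s = t := by
      have h0 := (div_eq_zero_iff.1 hz2).resolve_right h27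
      rcases mul_eq_zero.1 h0 with h | h
      · have := pow_eq_zero_iff (n := 2) (by norm_num) |>.1 h
        linarith [sub_eq_zero.1 this]
      · exact absurd h (ne_of_gt hW)
    have he0 : x^3+y^3+z^3 = 2*t^3/9 := by
      have hb3 : (b^2/3) * (2*s^3/9 - (x^3+y^3+z^3)) = 0 := by linarith
      have h0 : 2*s^3/9 - (x^3+y^3+z^3) = 0 := by
        rcases mul_eq_zero.1 hb3 with h | h
        · exact absurd h (by positivity)
        · exact h
      rw [← hst]; linarith
    have hp0 : x^2+y^2+z^2 = 2*t^2/3 := by rw [hps, hst]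
    have hd0 : (x-y)*(y-z)*(z-x) = 0 := by
      have hpc : (x^2+y^2+z^2)^3 = (2*t^2/3)^3 := by rw [hp0]
      have hec : (x^3+y^3+z^3)^2 = (2*t^3/9)^2 := by rw [he0]
      have hr : (2*t^2/3)^3 - 6*(2*t^3/9)^2 = 0 := by ring
      have h2 : ((x-y)*(y-z)*(z-x))^2 = 0 := by linarith
      exact pow_eq_zero_iff (n := 2) (by norm_num) |>.1 h2
    have hclass := eig_classify' t x y z ht hsum hp0 he0 hd0
    have hμk : ∃ k : Fin 3, ∀ p, hH.eigenvalues p = -t/3 + (if p = k then t else 0) := by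
      rcases hclass with ⟨hvx, hvy, hvz⟩ | ⟨hvy, hvx, hvz⟩ | ⟨hvz, hvx, hvy⟩
      · refine ⟨0, fun p => ?_⟩
        fin_cases p
        · show hH.eigenvalues 0 = -t/3 + if (0:Fin 3) = (0:Fin 3) then t else 0
          rw [← hx, if_pos rfl, hvx]; ring
        · show hH.eigenvalues 1 = -t/3 + if (1:Fin 3) = (0:Fin 3) then t else 0
          rw [← hy, if_neg (by decide), hvy]; ring
        · show hH.eigenvalues 2 = -t/3 + if (2:Fin 3) = (0:Fin 3) then t else 0
          rw [← hz, if_neg (by decide), hvz]; ring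
      · refine ⟨1, fun p => ?_⟩
        fin_cases p
        · show hH.eigenvalues 0 = -t/3 + if (0:Fin 3) = (1:Fin 3) then t else 0
          rw [← hx, if_neg (by decide), hvx]; ring
        · show hH.eigenvalues 1 = -t/3 + if (1:Fin 3) = (1:Fin 3) then t else 0
          rw [← hy, if_pos rfl, hvy]; ring
        · show hH.eigenvalues 2 = -t/3 + if (2:Fin 3) = (1:Fin 3) then t else 0
          rw [← hz, if_neg (by decide), hvz]; ring
      · refine ⟨2, fun p => ?_⟩
        fin_cases p
        · show hH.eigenvalues 0 = -t/3 + if (0:Fin 3) = (2:Fin 3) then t else 0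
          rw [← hx, if_neg (by decide), hvx]; ring
        · show hH.eigenvalues 1 = -t/3 + if (1:Fin 3) = (2:Fin 3) then t else 0
          rw [← hy, if_neg (by decide), hvy]; ring
        · show hH.eigenvalues 2 = -t/3 + if (2:Fin 3) = (2:Fin 3) then t else 0
          rw [← hz, if_pos rfl, hvz]; ring
    obtain ⟨k, hμ⟩ := hμk
    obtain ⟨n, hn, hQn⟩ := reconstruct' Q hH t k hμ
    exact ⟨n, hn, by rw [← htdef]; exact hQn⟩
  · -- Q ∈ Nset → fb = 0
    intro hmem
    obtain ⟨n, hn, hQn⟩ := hmem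
    rw [← htdef] at hQn
    obtain ⟨h2, h3⟩ := memb_traces' n hn t Q hQn
    rw [fb, h2, h3, hC0]
    ring
end
end

section
/- Let Q be a symmetric traceless real 3×3 matrix whose largest eigenvalue λ₁ is simple (strictly greater than the other two eigenvalues), and let e₁ be a unit eigenvector of Q for λ₁. Then the function N ↦ |Q − N| on 𝒩 attains its minimum at N = s₊(e₁⊗e₁ − (1/3)Id), and this minimizer is unique: for every N ∈ 𝒩 with N ≠ s₊(e₁⊗e₁ − (1/3)Id) one has |Q − N| > |Q − s₊(e₁⊗e₁ − (1/3)Id)|. -/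
open MeasureTheory Matrix Metric Filter
open scoped RealInnerProductSpace

noncomputable section

attribute [local instance] Matrix.frobeniusNormedAddCommGroup Matrix.frobeniusNormedSpace

/-- Auxiliary: Rayleigh quotient bound and equality case for a symmetric matrix with
simple top eigenvalue. -/
lemma rayleigh_aux (Q : Mat3) (hsym : Q.IsSymm)
    (lam : ℝ) (e₁ : Fin 3 → ℝ) (hunit : (∑ i, e₁ i ^ 2) = 1)
    (hmax : ∀ (μ : ℝ) (v : Fin 3 → ℝ), v ≠ 0 → Q.mulVec v = μ • v → μ ≤ lam)
    (hsimple : ∀ v : Fin 3 → ℝ, Q.mulVec v = lam • v → ∃ t : ℝ, v = t • e₁) :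
    ∀ v : Fin 3 → ℝ, (∑ i, v i ^ 2) = 1 →
      (∑ i, ∑ j, v i * Q i j * v j) ≤ lam ∧
      ((∑ i, ∑ j, v i * Q i j * v j) = lam → ∃ t : ℝ, v = t • e₁) := by
  set φ : (Fin 3 → ℝ) → EuclideanSpace ℝ (Fin 3) :=
    fun v => (WithLp.equiv 2 (Fin 3 → ℝ)).symm v with hφ
  set T : EuclideanSpace ℝ (Fin 3) →L[ℝ] EuclideanSpace ℝ (Fin 3) :=
    LinearMap.toContinuousLinearMap (Matrix.toEuclideanLin Q) with hT
  have hherm : Q.IsHermitian := by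
    rw [Matrix.IsHermitian]
    ext i j
    simp [Matrix.conjTranspose_apply, hsym.apply]
  have hTsa : IsSelfAdjoint T := by
    rw [ContinuousLinearMap.isSelfAdjoint_iff_isSymmetric]
    simpa [hT] using Matrix.isHermitian_iff_isSymmetric.mp hherm
  have hre : ∀ v : Fin 3 → ℝ, T.reApplyInnerSelf (φ v) = ∑ i, ∑ j, v i * Q i j * v j := by
    intro v
    simp only [ContinuousLinearMap.reApplyInnerSelf, hT, hφ,
      LinearMap.coe_toContinuousLinearMap', WithLp.equiv_symm_apply,
      Matrix.toEuclideanLin_apply_piLp_toLp]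
    rw [show (inner ℝ (WithLp.toLp 2 (Q.mulVec v))
        (WithLp.toLp 2 v) : ℝ)
      = ∑ i, (Q.mulVec v i) * v i from by
        simp [PiLp.inner_apply, RCLike.inner_apply, mul_comm]]
    simp only [RCLike.re_to_real, Matrix.mulVec, dotProduct, Finset.sum_mul]
    apply Finset.sum_congr rfl; intro i _
    apply Finset.sum_congr rfl; intro j _
    ring
  have hnorm : ∀ v : Fin 3 → ℝ, (∑ i, v i ^ 2) = 1 → ‖φ v‖ = 1 := by
    intro v hv
    rw [EuclideanSpace.norm_eq]
    have : ∀ i, ‖((φ v) i : ℝ)‖ ^ 2 = v i ^ 2 := by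
      intro i; rw [Real.norm_eq_abs, sq_abs]; rfl
    simp only [this, hv, Real.sqrt_one]
  obtain ⟨x₀, hx₀mem, hx₀max⟩ :=
    (isCompact_sphere (0 : EuclideanSpace ℝ (Fin 3)) 1).exists_isMaxOn
      ⟨φ e₁, by simpa [mem_sphere_iff_norm] using hnorm e₁ hunit⟩
      T.reApplyInnerSelf_continuous.continuousOn
  have hx₀norm : ‖x₀‖ = 1 := by simpa [mem_sphere_iff_norm] using hx₀mem
  have hx₀ne : x₀ ≠ 0 := by intro h; rw [h] at hx₀norm; simp at hx₀norm
  have heq : T x₀ = T.rayleighQuotient x₀ • x₀ := by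
    apply hTsa.eq_smul_self_of_isLocalExtrOn_real
    rw [hx₀norm]
    exact Or.inr hx₀max.localize
  have hray : T.rayleighQuotient x₀ = T.reApplyInnerSelf x₀ := by
    rw [ContinuousLinearMap.rayleighQuotient, hx₀norm]; simp
  set μ₀ := T.reApplyInnerSelf x₀ with hμ₀
  have hTapp : ∀ x : EuclideanSpace ℝ (Fin 3),
      T x = φ (Q.mulVec (WithLp.equiv 2 (Fin 3 → ℝ) x)) := by
    intro x; rfl
  have hmul₀ : Q.mulVec (WithLp.equiv 2 (Fin 3 → ℝ) x₀) =
      μ₀ • (WithLp.equiv 2 (Fin 3 → ℝ) x₀) := by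
    have := heq
    rw [hTapp, hray] at this
    have := congrArg (WithLp.equiv 2 (Fin 3 → ℝ)) this
    simpa [hφ] using this
  have hv₀ne : (WithLp.equiv 2 (Fin 3 → ℝ) x₀) ≠ 0 := by
    intro h
    apply hx₀ne
    have := congrArg (WithLp.equiv 2 (Fin 3 → ℝ)).symm h
    simpa using this
  have hμ₀le : μ₀ ≤ lam := hmax μ₀ _ hv₀ne hmul₀
  intro v hv
  have hvmem : φ v ∈ sphere (0 : EuclideanSpace ℝ (Fin 3)) 1 := by
    simpa [mem_sphere_iff_norm] using hnorm v hv
  have hle : (∑ i, ∑ j, v i * Q i j * v j) ≤ lam := by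
    calc (∑ i, ∑ j, v i * Q i j * v j) = T.reApplyInnerSelf (φ v) := (hre v).symm
    _ ≤ μ₀ := hx₀max hvmem
    _ ≤ lam := hμ₀le
  refine ⟨hle, fun hveq => ?_⟩
  have hvmax : IsMaxOn T.reApplyInnerSelf (sphere (0 : EuclideanSpace ℝ (Fin 3)) 1) (φ v) := by
    intro y hy
    have h1 : T.reApplyInnerSelf y ≤ μ₀ := hx₀max hy
    have h2 : T.reApplyInnerSelf (φ v) = lam := by rw [hre v, hveq]
    simp only [Set.mem_setOf_eq, h2]
    exact le_trans h1 hμ₀le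
  have hφvnorm : ‖φ v‖ = 1 := hnorm v hv
  have heqv : T (φ v) = T.rayleighQuotient (φ v) • (φ v) := by
    apply hTsa.eq_smul_self_of_isLocalExtrOn_real
    rw [hφvnorm]
    exact Or.inr hvmax.localize
  have hrayv : T.rayleighQuotient (φ v) = lam := by
    rw [ContinuousLinearMap.rayleighQuotient, hφvnorm, hre v, hveq]; simp
  have hmulv : Q.mulVec v = lam • v := by
    have := heqv
    rw [hTapp, hrayv] at this
    have h2 := congrArg (WithLp.equiv 2 (Fin 3 → ℝ)) this
    simpa [hφ] using h2
  exact hsimple v hmulv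

/-- Auxiliary: expansion of the squared Frobenius distance to a point of the manifold. -/
lemma frob_expand_aux (Q : Mat3) (htr : Q.trace = 0) (s : ℝ) (n : Fin 3 → ℝ)
    (hn : (∑ i, n i ^ 2) = 1) :
    frobSq (Q - s • (outer n - (1 / 3 : ℝ) • (1 : Mat3))) =
      frobSq Q - 2 * s * (∑ i, ∑ j, n i * Q i j * n j) + s ^ 2 * (2 / 3) := by
  have htr' : Q 0 0 + Q 1 1 + Q 2 2 = 0 := by
    simpa [Matrix.trace, Fin.sum_univ_three] using htr
  have hn' : n 0 ^ 2 + n 1 ^ 2 + n 2 ^ 2 = 1 := by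
    simpa [Fin.sum_univ_three] using hn
  simp only [frobSq, outer, Matrix.sub_apply, Matrix.smul_apply, Matrix.one_apply,
    smul_eq_mul, Fin.sum_univ_three]
  norm_num [Fin.ext_iff]
  linear_combination (2 * s / 3) * htr' +
    s ^ 2 * (n 0 ^ 2 + n 1 ^ 2 + n 2 ^ 2 + 1 / 3) * hn'

/-- if the largest eigenvalue `λ₁` of a symmetric traceless `Q` is simple with
unit eigenvector `e₁`, then `N ↦ |Q − N|` on `𝒩` attains its minimum exactly at
`N = s₊(e₁⊗e₁ − (1/3)Id)`. -/
theorem stmt2 (a b c : ℝ) (ha : 0 < a) (hb : 0 < b) (hc : 0 < c)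
    (Q : Mat3) (hsym : Q.IsSymm) (htr : Q.trace = 0)
    (lam : ℝ) (e₁ : Fin 3 → ℝ) (hunit : (∑ i, e₁ i ^ 2) = 1)
    (heig : Q.mulVec e₁ = lam • e₁)
    (hmax : ∀ (μ : ℝ) (v : Fin 3 → ℝ), v ≠ 0 → Q.mulVec v = μ • v → μ ≤ lam)
    (hsimple : ∀ v : Fin 3 → ℝ, Q.mulVec v = lam • v → ∃ t : ℝ, v = t • e₁) :
    sPlus a b c • (outer e₁ - (1 / 3 : ℝ) • (1 : Mat3)) ∈ Nset a b c ∧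
    (∀ N ∈ Nset a b c,
      frob (Q - sPlus a b c • (outer e₁ - (1 / 3 : ℝ) • (1 : Mat3))) ≤ frob (Q - N)) ∧
    (∀ N ∈ Nset a b c, N ≠ sPlus a b c • (outer e₁ - (1 / 3 : ℝ) • (1 : Mat3)) →
      frob (Q - sPlus a b c • (outer e₁ - (1 / 3 : ℝ) • (1 : Mat3))) < frob (Q - N)) := by
  have hspos : 0 < sPlus a b c := by
    rw [sPlus]
    have h2 : 0 ≤ Real.sqrt (b ^ 4 + 24 * a ^ 2 * c ^ 2) := Real.sqrt_nonneg _
    positivity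
  have hray := rayleigh_aux Q hsym lam e₁ hunit hmax hsimple
  have hei : ∀ i, (∑ j, Q i j * e₁ j) = lam * e₁ i := by
    intro i
    have := congrFun heig i
    simpa [Matrix.mulVec, dotProduct] using this
  have hRe : (∑ i, ∑ j, e₁ i * Q i j * e₁ j) = lam := by
    calc (∑ i, ∑ j, e₁ i * Q i j * e₁ j)
        = ∑ i, e₁ i * (∑ j, Q i j * e₁ j) := by
          refine Finset.sum_congr rfl fun i _ => ?_
          rw [Finset.mul_sum]
          exact Finset.sum_congr rfl fun j _ => by ring
      _ = ∑ i, lam * e₁ i ^ 2 := by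
          refine Finset.sum_congr rfl fun i _ => ?_
          rw [hei i]; ring
      _ = lam := by rw [← Finset.mul_sum, hunit, mul_one]
  have hfnn : ∀ A : Mat3, 0 ≤ frobSq A := fun A =>
    Finset.sum_nonneg fun i _ => Finset.sum_nonneg fun j _ => sq_nonneg _
  have hdiff : ∀ n : Fin 3 → ℝ, (∑ i, n i ^ 2) = 1 →
      frobSq (Q - sPlus a b c • (outer n - (1 / 3 : ℝ) • (1 : Mat3))) =
        frobSq (Q - sPlus a b c • (outer e₁ - (1 / 3 : ℝ) • (1 : Mat3))) +
          2 * sPlus a b c * (lam - (∑ i, ∑ j, n i * Q i j * n j)) := by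
    intro n hn
    rw [frob_expand_aux Q htr _ n hn, frob_expand_aux Q htr _ e₁ hunit, hRe]
    ring
  refine ⟨⟨e₁, hunit, rfl⟩, ?_, ?_⟩
  · rintro N ⟨n, hn, rfl⟩
    apply Real.sqrt_le_sqrt
    rw [hdiff n hn]
    have h1 := (hray n hn).1
    nlinarith
  · rintro N ⟨n, hn, rfl⟩ hne
    have hlt : (∑ i, ∑ j, n i * Q i j * n j) < lam := by
      rcases lt_or_eq_of_le (hray n hn).1 with h | h
      · exact h
      · exfalso
        obtain ⟨t, ht⟩ := (hray n hn).2 h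
        have houter : outer n = outer e₁ := by
          have ht2 : t ^ 2 = 1 := by
            have := hn
            rw [ht] at this
            simp only [Pi.smul_apply, smul_eq_mul, mul_pow] at this
            rw [← Finset.mul_sum, hunit, mul_one] at this
            exact this
          ext i j
          simp only [outer, ht, Pi.smul_apply, smul_eq_mul]
          linear_combination (e₁ i * e₁ j) * ht2
        exact hne (by rw [houter])
    apply Real.sqrt_lt_sqrt (hfnn _)
    rw [hdiff n hn]
    nlinarith


end
end

section
/- For a, b, c > 0 there exist constants δ > 0 and C ≥ 1 such that for every symmetric traceless real 3×3 matrix Q with dist(Q,𝒩) ≤ δ one has C⁻¹ · dist(Q,𝒩) ≤ |Q² − (s₊/3)Q − (2s₊²/9)Id| ≤ C · dist(Q,𝒩). -/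
open MeasureTheory Matrix Metric Filter
open scoped RealInnerProductSpace

noncomputable section

attribute [local instance] Matrix.frobeniusNormedAddCommGroup Matrix.frobeniusNormedSpace

section Aux

variable {Q : Mat3} {n : Fin 3 → ℝ} {lam : ℝ}

lemma frob_eq_norm (A : Mat3) : frob A = ‖A‖ := by
  rw [Matrix.frobenius_norm_def, ← Real.sqrt_eq_rpow]
  unfold frob frobSq
  congr 1
  refine Finset.sum_congr rfl fun i _ => Finset.sum_congr rfl fun j _ => ?_
  rw [Real.rpow_two, Real.norm_eq_abs, sq_abs]

lemma frob_nonneg (A : Mat3) : 0 ≤ frob A := Real.sqrt_nonneg _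

lemma frob_mul_le (A B : Mat3) : frob (A * B) ≤ frob A * frob B := by
  simp only [frob_eq_norm]; exact Matrix.frobenius_norm_mul A B

lemma frob_add_le (A B : Mat3) : frob (A + B) ≤ frob A + frob B := by
  simp only [frob_eq_norm]; exact norm_add_le A B

lemma frob_smul (r : ℝ) (A : Mat3) : frob (r • A) = |r| * frob A := by
  simp only [frob_eq_norm]; rw [norm_smul, Real.norm_eq_abs]

lemma hQn_coord (hn : Q *ᵥ n = lam • n) (i : Fin 3) :
    Q i 0 * n 0 + Q i 1 * n 1 + Q i 2 * n 2 = lam * n i := by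
  have := congrFun hn i
  simpa [Matrix.mulVec, dotProduct, Fin.sum_univ_three] using this

lemma mul_outer_eq (hn : Q *ᵥ n = lam • n) : Q * outer n = lam • outer n := by
  ext i j
  simp only [Matrix.mul_apply, outer, Matrix.smul_apply, smul_eq_mul, Fin.sum_univ_three]
  linear_combination n j * hQn_coord hn i

lemma outer_mul_eq (hsym : Q.IsSymm) (hn : Q *ᵥ n = lam • n) :
    outer n * Q = lam • outer n := by
  ext i j
  have hs : ∀ a b : Fin 3, Q a b = Q b a := fun a b => (hsym.apply a b).symm ▸ rfl
  simp only [Matrix.mul_apply, outer, Matrix.smul_apply, smul_eq_mul, Fin.sum_univ_three]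
  linear_combination n i * hQn_coord hn j
    - n i * n 0 * hs j 0 - n i * n 1 * hs j 1 - n i * n 2 * hs j 2

lemma outer_mul_outer (hu : (∑ i, n i ^ 2) = 1) : outer n * outer n = outer n := by
  ext i j
  simp only [Fin.sum_univ_three] at hu
  simp only [Matrix.mul_apply, outer, Fin.sum_univ_three]
  linear_combination (n i * n j) * hu

lemma key_id (s : ℝ) (hsym : Q.IsSymm) (hu : (∑ i, n i ^ 2) = 1)
    (hn : Q *ᵥ n = lam • n) :
    Q * Q - (s / 3) • Q - (2 * s ^ 2 / 9) • (1 : Mat3)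
      = s • ((2 * (lam - 2 * s / 3)) • outer n - (Q - s • (outer n - (1 / 3 : ℝ) • 1)))
        + (Q - s • (outer n - (1 / 3 : ℝ) • 1)) * (Q - s • (outer n - (1 / 3 : ℝ) • 1)) := by
  have h1 : Q * outer n = lam • outer n := mul_outer_eq hn
  have h2 : outer n * Q = lam • outer n := outer_mul_eq hsym hn
  have h3 : outer n * outer n = outer n := outer_mul_outer hu
  have expand : (Q - s • (outer n - (1 / 3 : ℝ) • 1)) * (Q - s • (outer n - (1 / 3 : ℝ) • 1))
      = Q * Q - s • (Q * outer n) + (s/3) • Q - s • (outer n * Q)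
        + (s^2) • (outer n * outer n) - (s^2/3) • outer n
        + (s/3) • Q - (s^2/3) • outer n + (s^2/9) • (1 : Mat3) := by
    simp only [mul_sub, sub_mul, smul_mul_assoc, mul_smul_comm, mul_one, one_mul,
      smul_sub, smul_smul]
    module
  rw [expand, h1, h2, h3]
  module

lemma frobSq_smul_sub (mu : ℝ) (E : Mat3) (hu : (∑ i, n i ^ 2) = 1)
    (h2 : ∑ i, ∑ j, n i * n j * E i j = mu) :
    frobSq ((2 * mu) • outer n - E) = frobSq E := by
  simp only [Fin.sum_univ_three] at hu h2
  simp only [frobSq, Matrix.sub_apply, Matrix.smul_apply, outer, smul_eq_mul,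
    Fin.sum_univ_three]
  linear_combination (4 * mu^2 * (n 0 ^ 2 + n 1 ^ 2 + n 2 ^ 2 + 1)) * hu - (4 * mu) * h2

lemma inner_E (s : ℝ) (hu : (∑ i, n i ^ 2) = 1) (hn : Q *ᵥ n = lam • n) :
    ∑ i, ∑ j, n i * n j * (Q - s • (outer n - (1 / 3 : ℝ) • 1)) i j = lam - 2 * s / 3 := by
  have h0 := hQn_coord hn 0
  have h1 := hQn_coord hn 1
  have h2 := hQn_coord hn 2
  simp only [Fin.sum_univ_three] at hu
  simp only [Matrix.sub_apply, Matrix.smul_apply, Matrix.one_apply, outer, smul_eq_mul,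
    Fin.sum_univ_three]
  norm_num [Fin.ext_iff]
  linear_combination n 0 * h0 + n 1 * h1 + n 2 * h2
    + (lam - s * (n 0 ^ 2 + n 1 ^ 2 + n 2 ^ 2 + 1) + s / 3) * hu

lemma frobSq_dist (s : ℝ) (m : Fin 3 → ℝ) (hu : (∑ i, m i ^ 2) = 1)
    (htr : Q.trace = 0) :
    frobSq (Q - s • (outer m - (1 / 3 : ℝ) • 1))
      = frobSq Q - 2 * s * (∑ i, ∑ j, Q i j * m i * m j) + 2 * s ^ 2 / 3 := by
  have htr' : Q 0 0 + Q 1 1 + Q 2 2 = 0 := by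
    simpa [Matrix.trace, Matrix.diag, Fin.sum_univ_three] using htr
  simp only [Fin.sum_univ_three] at hu
  simp only [frobSq, Matrix.sub_apply, Matrix.smul_apply, Matrix.one_apply, outer,
    smul_eq_mul, Fin.sum_univ_three]
  norm_num [Fin.ext_iff]
  linear_combination (s^2 * (m 0 ^ 2 + m 1 ^ 2 + m 2 ^ 2 + 1) - 2 * s^2 / 3) * hu
    + (2 * s / 3) * htr'

lemma coordE3 (u v : E3) : ⟪u, v⟫ = ∑ i, u i * v i := by
  simp [PiLp.inner_apply, RCLike.inner_apply, conj_trivial, mul_comm]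

lemma inner_mulVec_coord (Q : Mat3) (u v : E3) :
    ⟪u, (WithLp.toLp 2 (Q *ᵥ v) : E3)⟫ = ∑ i, ∑ j, Q i j * u i * v j := by
  rw [coordE3]
  simp only [Matrix.mulVec, dotProduct, Fin.sum_univ_three]
  ring

lemma eig_inner (hsym : Q.IsSymm) (hn : Q *ᵥ n = lam • n) (x : Fin 3 → ℝ) :
    ∑ j, n j * (Q *ᵥ x) j = lam * ∑ j, x j * n j := by
  have hs : ∀ a b : Fin 3, Q a b = Q b a := fun a b => (hsym.apply a b).symm ▸ rfl
  have h0 := hQn_coord hn 0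
  have h1 := hQn_coord hn 1
  have h2 := hQn_coord hn 2
  simp only [Matrix.mulVec, dotProduct, Fin.sum_univ_three]
  linear_combination x 0 * h0 + x 1 * h1 + x 2 * h2
    + (x 0 * n 1 - x 1 * n 0) * hs 1 0 + (x 0 * n 2 - x 2 * n 0) * hs 2 0
    + (x 1 * n 2 - x 2 * n 1) * hs 2 1

lemma rayleigh (Q : Mat3) (hsym : Q.IsSymm) :
    ∃ n : Fin 3 → ℝ, (∑ i, n i ^ 2) = 1 ∧ ∃ lam : ℝ, Q *ᵥ n = lam • n ∧
      ∀ m : Fin 3 → ℝ, (∑ i, m i ^ 2) = 1 → (∑ i, ∑ j, Q i j * m i * m j) ≤ lam := by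
  have hH : Q.IsHermitian := by
    rw [Matrix.IsHermitian, Matrix.conjTranspose_eq_transpose_of_trivial]; exact hsym
  set b := hH.eigenvectorBasis with hbdef
  obtain ⟨i₀, hi₀⟩ := Finite.exists_max hH.eigenvalues
  refine ⟨(b i₀ : E3), ?_, hH.eigenvalues i₀, hH.mulVec_eigenvectorBasis i₀, ?_⟩
  · have h1 : ‖(b i₀ : E3)‖ = 1 := b.orthonormal.1 i₀
    rw [EuclideanSpace.norm_eq] at h1
    have := (Real.sqrt_eq_one).1 h1
    simpa [Real.norm_eq_abs, sq_abs] using this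
  · intro m hm
    set x : E3 := WithLp.toLp 2 m with hxdef
    have hxnorm : ‖x‖ = 1 := by
      rw [EuclideanSpace.norm_eq, Real.sqrt_eq_one]
      simpa [Real.norm_eq_abs, sq_abs] using hm
    have key : (∑ i, ∑ j, Q i j * m i * m j) = ⟪x, (WithLp.toLp 2 (Q *ᵥ x) : E3)⟫ :=
      (inner_mulVec_coord Q x x).symm
    rw [key, ← OrthonormalBasis.sum_inner_mul_inner b x (WithLp.toLp 2 (Q *ᵥ x) : E3)]
    have hterm : ∀ i, ⟪x, (b i : E3)⟫ * ⟪(b i : E3), (WithLp.toLp 2 (Q *ᵥ x) : E3)⟫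
        = hH.eigenvalues i * (⟪x, (b i : E3)⟫ * ⟪(b i : E3), x⟫) := by
      intro i
      have h2 : ⟪(b i : E3), (WithLp.toLp 2 (Q *ᵥ x) : E3)⟫ = hH.eigenvalues i * ⟪(b i : E3), x⟫ := by
        rw [coordE3 (b i) (WithLp.toLp 2 (Q *ᵥ x) : E3), coordE3 (b i) x]
        have h3 := eig_inner hsym (hH.mulVec_eigenvectorBasis i) x
        rw [← hbdef] at h3
        simp only [PiLp.toLp_apply] at h3 ⊢
        simp only [Fin.sum_univ_three] at h3 ⊢
        linear_combination h3
      rw [h2]; ring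
    calc ∑ i, ⟪x, (b i : E3)⟫ * ⟪(b i : E3), (WithLp.toLp 2 (Q *ᵥ x) : E3)⟫
        = ∑ i, hH.eigenvalues i * (⟪x, (b i : E3)⟫ * ⟪(b i : E3), x⟫) :=
          Finset.sum_congr rfl fun i _ => hterm i
      _ ≤ ∑ i, hH.eigenvalues i₀ * (⟪x, (b i : E3)⟫ * ⟪(b i : E3), x⟫) := by
          refine Finset.sum_le_sum fun i _ => ?_
          have hnn : 0 ≤ ⟪x, (b i : E3)⟫ * ⟪(b i : E3), x⟫ := by
            rw [real_inner_comm ((b i : E3)) x]; exact mul_self_nonneg _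
          exact mul_le_mul_of_nonneg_right (hi₀ i) hnn
      _ = hH.eigenvalues i₀ * ∑ i, ⟪x, (b i : E3)⟫ * ⟪(b i : E3), x⟫ := by
          rw [Finset.mul_sum]
      _ = hH.eigenvalues i₀ := by
          rw [b.sum_inner_mul_inner x x, real_inner_self_eq_norm_sq, hxnorm]; norm_num

end Aux

/-- near `𝒩`, `|Q² − (s₊/3)Q − (2s₊²/9)Id|` is comparable to `dist(Q,𝒩)`. -/
theorem stmt4 (a b c : ℝ) (ha : 0 < a) (hb : 0 < b) (hc : 0 < c) :
    ∃ δ : ℝ, 0 < δ ∧ ∃ C : ℝ, 1 ≤ C ∧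
      ∀ Q : Mat3, Q.IsSymm → Q.trace = 0 → distN a b c Q ≤ δ →
        C⁻¹ * distN a b c Q
            ≤ frob (Q * Q - (sPlus a b c / 3) • Q - (2 * (sPlus a b c) ^ 2 / 9) • (1 : Mat3)) ∧
        frob (Q * Q - (sPlus a b c / 3) • Q - (2 * (sPlus a b c) ^ 2 / 9) • (1 : Mat3))
            ≤ C * distN a b c Q := by
  have hspos : 0 < sPlus a b c := by
    unfold sPlus
    have h2 : 0 ≤ Real.sqrt (b ^ 4 + 24 * a ^ 2 * c ^ 2) := Real.sqrt_nonneg _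
    positivity
  set s := sPlus a b c with hsdef
  refine ⟨s / 2, by positivity, 2 / s + 2 * s + 1, ?_, ?_⟩
  · have h1 : 0 < 2 / s := by positivity
    nlinarith
  intro Q hQsym hQtr hdist
  obtain ⟨n, hu, lam, hn, hray⟩ := rayleigh Q hQsym
  set N₀ : Mat3 := s • (outer n - (1 / 3 : ℝ) • 1) with hN0
  set E : Mat3 := Q - N₀ with hEdef
  set d : ℝ := frob E with hd
  have hd0 : 0 ≤ d := frob_nonneg E
  -- the Rayleigh quotient of the eigenvector
  have hRn : (∑ i, ∑ j, Q i j * n i * n j) = lam := by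
    have h0 := hQn_coord hn 0
    have h1 := hQn_coord hn 1
    have h2 := hQn_coord hn 2
    simp only [Fin.sum_univ_three] at hu ⊢
    linear_combination n 0 * h0 + n 1 * h1 + n 2 * h2 + lam * hu
  -- identification of the distance
  have hdistN : distN a b c Q = d := by
    have hmem : d ∈ {x : ℝ | ∃ N ∈ Nset a b c, x = frob (Q - N)} :=
      ⟨N₀, ⟨n, hu, hN0⟩, by rw [hd, hEdef]⟩
    have hlbS : ∀ x ∈ {x : ℝ | ∃ N ∈ Nset a b c, x = frob (Q - N)}, d ≤ x := by
      rintro x ⟨N, ⟨m, hum, rfl⟩, rfl⟩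
      rw [hd, hEdef, hN0]
      unfold frob
      apply Real.sqrt_le_sqrt
      rw [frobSq_dist s n hu hQtr, frobSq_dist s m hum hQtr, hRn]
      have := hray m hum
      nlinarith
    exact le_antisymm (csInf_le ⟨d, hlbS⟩ hmem) (le_csInf ⟨d, hmem⟩ hlbS)
  rw [hdistN] at hdist ⊢
  -- the key algebraic identity
  have hid : Q * Q - (s / 3) • Q - (2 * s ^ 2 / 9) • (1 : Mat3)
      = s • ((2 * (lam - 2 * s / 3)) • outer n - E) + E * E := by
    rw [hEdef, hN0]; exact key_id s hQsym hu hn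
  have hsB : frob (s • ((2 * (lam - 2 * s / 3)) • outer n - E)) = s * d := by
    rw [frob_smul, abs_of_pos hspos]
    congr 1
    unfold frob
    congr 1
    apply frobSq_smul_sub (lam - 2 * s / 3) E hu
    rw [hEdef, hN0]
    exact inner_E s hu hn
  have hEE : frob (E * E) ≤ d * d := by
    have := frob_mul_le E E
    rw [← hd] at this
    exact this
  set A : Mat3 := Q * Q - (s / 3) • Q - (2 * s ^ 2 / 9) • (1 : Mat3) with hA
  have hub : frob A ≤ s * d + d * d := by
    rw [hid]
    calc frob (s • ((2 * (lam - 2 * s / 3)) • outer n - E) + E * E)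
        ≤ frob (s • ((2 * (lam - 2 * s / 3)) • outer n - E)) + frob (E * E) :=
          frob_add_le _ _
      _ ≤ s * d + d * d := by rw [hsB]; linarith
  have hlb : s * d - d * d ≤ frob A := by
    have hB : s • ((2 * (lam - 2 * s / 3)) • outer n - E) = A - E * E := by
      rw [hid]; abel
    have : frob (A - E * E) ≤ frob A + frob (E * E) := by
      have h1 : A - E * E = A + (-(E * E)) := by abel
      rw [h1]
      refine (frob_add_le A (-(E * E))).trans ?_
      have : frob (-(E * E)) = frob (E * E) := by
        simp only [frob_eq_norm]; exact norm_neg _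
      rw [this]
    rw [hB] at hsB
    rw [hsB] at this
    linarith
  have hds : d ≤ s / 2 := hdist
  have hCpos : 0 < 2 / s + 2 * s + 1 := by positivity
  constructor
  · -- lower bound
    have hCinv : (2 / s + 2 * s + 1)⁻¹ ≤ s / 2 := by
      rw [show s / 2 = (2 / s)⁻¹ by rw [inv_div]]
      apply inv_anti₀ (by positivity)
      nlinarith
    calc (2 / s + 2 * s + 1)⁻¹ * d ≤ (s / 2) * d := by
          apply mul_le_mul_of_nonneg_right hCinv hd0
      _ ≤ s * d - d * d := by nlinarith
      _ ≤ frob A := hlb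
  · -- upper bound
    calc frob A ≤ s * d + d * d := hub
      _ ≤ (2 / s + 2 * s + 1) * d := by nlinarith [div_pos (by norm_num : (0:ℝ) < 2) hspos]

end
end

section
/- Let U ⊂ ℝ³ be open and let n : U → ℝ³ be differentiable with |n(x)| = 1 for all x ∈ U. Define Q(x) = s₊(n(x)⊗n(x) − (1/3)Id). Then Q is differentiable on U and at every x ∈ U one has the pointwise identity |∇Q(x)|² = 2s₊²|∇n(x)|², where |∇Q|² = Σ_{α=1}^3 |∂_αQ|² (Frobenius norms) and |∇n|² = Σ_{α=1}^3 |∂_αn|². -/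
open MeasureTheory Matrix Metric Filter
open scoped RealInnerProductSpace

noncomputable section

attribute [local instance] Matrix.frobeniusNormedAddCommGroup Matrix.frobeniusNormedSpace

/-- `|∇n(x)|²` for a vector-valued map. -/
def gradSqV (n : E3 → E3) (x : E3) : ℝ :=
  ∑ α, ‖fderiv ℝ n x (EuclideanSpace.single α 1)‖ ^ 2

def toPi : Mat3 ≃L[ℝ] (Fin 3 → Fin 3 → ℝ) :=
  (LinearEquiv.refl ℝ Mat3 : Mat3 ≃ₗ[ℝ] (Fin 3 → Fin 3 → ℝ)).toContinuousLinearEquiv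

lemma normsq_E3 (v : E3) : ‖v‖ ^ 2 = ∑ i, (v i) ^ 2 := by
  rw [EuclideanSpace.norm_eq, Real.sq_sqrt (by positivity)]
  simp [Real.norm_eq_abs, sq_abs]

lemma key (s : ℝ) (a b : Fin 3 → ℝ) (h1 : ∑ i, a i ^ 2 = 1) (h2 : ∑ i, a i * b i = 0) :
    ∑ i, ∑ j, (s * (a i * b j + a j * b i)) ^ 2 = 2 * s ^ 2 * ∑ i, b i ^ 2 := by
  simp only [Fin.sum_univ_three] at *
  linear_combination (2 * s ^ 2 * (b 0 ^ 2 + b 1 ^ 2 + b 2 ^ 2)) * h1 +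
    (2 * s ^ 2 * (a 0 * b 0 + a 1 * b 1 + a 2 * b 2)) * h2

/-- if `n : U → S²` is differentiable and `Q = s₊(n⊗n − (1/3)Id)`, then `Q` is
differentiable on `U` and `|∇Q|² = 2s₊²|∇n|²` pointwise on `U`. -/
theorem stmt6 (s : ℝ) (hs : 0 < s) (U : Set E3) (hU : IsOpen U)
    (n : E3 → E3) (hdiff : ∀ x ∈ U, DifferentiableAt ℝ n x)
    (hunit : ∀ x ∈ U, ‖n x‖ = 1)
    (Q : E3 → Mat3) (hQ : ∀ x, Q x = s • (outer (n x) - (1 / 3 : ℝ) • (1 : Mat3))) :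
    ∀ x ∈ U, DifferentiableAt ℝ Q x ∧ gradSq Q x = 2 * s ^ 2 * gradSqV n x := by
  intro x hx
  have hn := (hdiff x hx).hasFDerivAt
  set f' := fderiv ℝ n x with hf'
  set L : Fin 3 → (E3 →L[ℝ] ℝ) := fun i => (EuclideanSpace.proj i : E3 →L[ℝ] ℝ).comp f' with hL
  have hcomp : ∀ i : Fin 3, HasFDerivAt (fun y => n y i) (L i) x :=
    fun i => ((EuclideanSpace.proj i : E3 →L[ℝ] ℝ).hasFDerivAt (x := n x)).comp x hn
  set D : Fin 3 → Fin 3 → (E3 →L[ℝ] ℝ) :=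
    fun i j => s • (n x i • L j + n x j • L i) with hD
  have hE : ∀ i j, HasFDerivAt (fun y => Q y i j) (D i j) x := by
    intro i j
    have h1 : HasFDerivAt (fun y => s * ((n y i * n y j) - (1 / 3 : ℝ) * (1 : Mat3) i j))
        (D i j) x := (((hcomp i).mul (hcomp j)).sub_const _).const_mul s
    have funeq : (fun y => Q y i j) =
        fun y => s * ((n y i * n y j) - (1 / 3 : ℝ) * (1 : Mat3) i j) := by
      funext y
      simp [hQ, outer, Matrix.smul_apply, Matrix.sub_apply, smul_eq_mul]
    rw [funeq]; exact h1
  set P : E3 →L[ℝ] (Fin 3 → Fin 3 → ℝ) :=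
    ContinuousLinearMap.pi (fun i => ContinuousLinearMap.pi (fun j => D i j)) with hP
  have hPiQ : HasFDerivAt (fun y => toPi (Q y)) P x :=
    hasFDerivAt_pi.2 fun i => hasFDerivAt_pi.2 fun j => hE i j
  have hQd : HasFDerivAt Q ((toPi.symm : (Fin 3 → Fin 3 → ℝ) →L[ℝ] Mat3).comp P) x :=
    toPi.symm.hasFDerivAt.comp x hPiQ
  refine ⟨hQd.differentiableAt, ?_⟩
  set m : Fin 3 → E3 := fun α => f' (EuclideanSpace.single α 1) with hm
  have hentry : ∀ α i j, pd Q α x i j = s * (n x i * m α j + n x j * m α i) := by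
    intro α i j
    rw [pd, hQd.fderiv]
    show (D i j) (EuclideanSpace.single α 1) = _
    simp [hD, hL, hm, smul_eq_mul]
    ring
  have hsum1 : ∑ i, (n x i) ^ 2 = 1 := by
    rw [← normsq_E3, hunit x hx]; norm_num
  have horth : ∀ α, ∑ i, n x i * m α i = 0 := by
    have hg : HasFDerivAt (fun y => ∑ i, n y i * n y i)
        (∑ i, (n x i • L i + n x i • L i)) x :=
      HasFDerivAt.fun_sum fun i _ => (hcomp i).mul (hcomp i)
    have hconst : fderiv ℝ (fun y => ∑ i, n y i * n y i) x = 0 := by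
      have hev : (fun y => ∑ i, n y i * n y i) =ᶠ[nhds x] fun _ => (1 : ℝ) := by
        filter_upwards [hU.mem_nhds hx] with y hy
        have := normsq_E3 (n y)
        simp only [pow_two] at this
        rw [← this, hunit y hy]; norm_num
      rw [hev.fderiv_eq, fderiv_fun_const]; rfl
    have h0 : (∑ i, (n x i • L i + n x i • L i)) = 0 := by rw [← hg.fderiv, hconst]
    intro α
    have h1 := congrArg (fun T : E3 →L[ℝ] ℝ => T (EuclideanSpace.single α 1)) h0
    simp only [ContinuousLinearMap.sum_apply, ContinuousLinearMap.add_apply,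
      ContinuousLinearMap.smul_apply,
      ContinuousLinearMap.zero_apply, smul_eq_mul] at h1
    have h2 : ∑ i, 2 * (n x i * m α i) = 0 := by
      rw [← h1]
      apply Finset.sum_congr rfl
      intro i _
      simp [hL, hm]
      ring
    rw [← Finset.mul_sum] at h2
    linarith
  have hfs : ∀ α, frobSq (pd Q α x) = 2 * s ^ 2 * ∑ i, (m α i) ^ 2 := by
    intro α
    rw [frobSq]
    calc ∑ i, ∑ j, (pd Q α x i j) ^ 2
        = ∑ i, ∑ j, (s * (n x i * m α j + n x j * m α i)) ^ 2 := by
          apply Finset.sum_congr rfl; intro i _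
          apply Finset.sum_congr rfl; intro j _
          rw [hentry]
      _ = 2 * s ^ 2 * ∑ i, (m α i) ^ 2 := key s (fun i => n x i) (m α) hsum1 (horth α)
  rw [gradSq, gradSqV]
  rw [Finset.mul_sum]
  apply Finset.sum_congr rfl
  intro α _
  rw [hfs α, normsq_E3]

end
end

section
/- Let Φ : ℝ³∖{0} → 𝒬₀ be the hedgehog map Φ(x) = s₊((x/|x|)⊗(x/|x|) − (1/3)Id). Then Φ is differentiable on ℝ³∖{0} with |∇Φ(x)|² = 4s₊²/|x|² for every x ≠ 0, and for every r > 0 one has ∫_{B_r} ½|∇Φ(x)|² dx = 8π s₊² r, where B_r is the open ball of radius r centered at the origin and the integral is with respect to Lebesgue measure; equivalently (1/r)∫_{B_r} ½|∇Φ|² dx = 8π s₊² for every r > 0. -/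
open MeasureTheory Matrix Metric Filter
open scoped RealInnerProductSpace

noncomputable section

attribute [local instance] Matrix.frobeniusNormedAddCommGroup Matrix.frobeniusNormedSpace

def vmv2 : E3 →ₗ[ℝ] E3 →ₗ[ℝ] Mat3 :=
  LinearMap.mk₂ ℝ (fun x y => Matrix.of fun i j => x i * y j)
    (fun x x' y => by ext i j; simp [Matrix.add_apply]; ring)
    (fun c x y => by ext i j; simp [Matrix.smul_apply]; ring)
    (fun x y y' => by ext i j; simp [Matrix.add_apply]; ring)
    (fun c x y => by ext i j; simp [Matrix.smul_apply]; ring)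

def vmvL : E3 →L[ℝ] E3 →L[ℝ] Mat3 :=
  LinearMap.toContinuousLinearMap
    ((LinearMap.toContinuousLinearMap :
        (E3 →ₗ[ℝ] Mat3) ≃ₗ[ℝ] (E3 →L[ℝ] Mat3)).toLinearMap ∘ₗ vmv2)

lemma vmvL_apply (x y : E3) (i j : Fin 3) : vmvL x y i j = x i * y j := rfl

def Φ₀ (s : ℝ) (y : E3) : Mat3 := s • ((‖y‖ ^ 2)⁻¹ • vmvL y y - (1 / 3 : ℝ) • (1 : Mat3))

def Dv (s : ℝ) (x : E3) : E3 →L[ℝ] Mat3 :=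
  s • (((‖x‖ ^ 2)⁻¹ : ℝ) • ((vmvL x).comp (ContinuousLinearMap.id ℝ E3) + (show E3 →L[ℝ] Mat3 from vmvL.flip x))
    + ((ContinuousLinearMap.smulRight (1 : ℝ →L[ℝ] ℝ) (-((‖x‖ ^ 2) ^ 2)⁻¹)).comp
        (2 • (innerSL ℝ x).comp (ContinuousLinearMap.id ℝ E3))).smulRight (vmvL x x))

lemma hasD (s : ℝ) (x : E3) (hx : x ≠ 0) : HasFDerivAt (Φ₀ s) (Dv s x) x := by
  have hn : ‖x‖ ≠ 0 := norm_ne_zero_iff.mpr hx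
  have hb : HasFDerivAt (fun y : E3 => vmvL y y)
      ((vmvL x).comp (ContinuousLinearMap.id ℝ E3) + (show E3 →L[ℝ] Mat3 from vmvL.flip x)) x :=
    vmvL.hasFDerivAt.clm_apply (hasFDerivAt_id x)
  have hq : HasFDerivAt (fun y : E3 => ‖y‖ ^ 2)
      (2 • (innerSL ℝ x).comp (ContinuousLinearMap.id ℝ E3)) x :=
    (hasFDerivAt_id x).norm_sq
  have hinv : HasFDerivAt (fun y : E3 => (‖y‖ ^ 2)⁻¹)
      ((ContinuousLinearMap.smulRight (1 : ℝ →L[ℝ] ℝ) (-((‖x‖ ^ 2) ^ 2)⁻¹)).comp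
        (2 • (innerSL ℝ x).comp (ContinuousLinearMap.id ℝ E3))) x :=
    (hasFDerivAt_inv (pow_ne_zero 2 hn)).comp x hq
  exact ((hinv.smul hb).sub_const _).const_smul s

lemma outer_eq (y : E3) (hy : y ≠ 0) :
    outer (‖y‖⁻¹ • y) = (‖y‖ ^ 2)⁻¹ • vmvL y y := by
  have hny : ‖y‖ ≠ 0 := norm_ne_zero_iff.mpr hy
  funext i j
  show (‖y‖⁻¹ • y) i * (‖y‖⁻¹ • y) j = (‖y‖ ^ 2)⁻¹ * (y i * y j)
  have h1 : (‖y‖⁻¹ • y) i = ‖y‖⁻¹ * y i := rfl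
  have h2 : (‖y‖⁻¹ • y) j = ‖y‖⁻¹ * y j := rfl
  rw [h1, h2, sq, mul_inv]; ring

lemma part1 (s : ℝ) (Φ : E3 → Mat3)
    (hΦ : ∀ x : E3, x ≠ 0 → Φ x = s • (outer (‖x‖⁻¹ • x) - (1 / 3 : ℝ) • (1 : Mat3)))
    (x : E3) (hx : x ≠ 0) :
    HasFDerivAt Φ (Dv s x) x := by
  have hev : Φ =ᶠ[nhds x] Φ₀ s := by
    filter_upwards [isOpen_compl_singleton.mem_nhds (by simpa using hx)] with y hy
    have hy0 : y ≠ 0 := by simpa using hy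
    rw [hΦ y hy0, Φ₀, outer_eq y hy0]
  exact (hasD s x hx).congr_of_eventuallyEq hev

lemma Dv_entry (s : ℝ) (x : E3) (α i j : Fin 3) :
    Dv s x (EuclideanSpace.single α 1) i j =
      s * ((‖x‖ ^ 2)⁻¹ * (x i * (if j = α then 1 else 0) + (if i = α then 1 else 0) * x j)
        - ((‖x‖ ^ 2) ^ 2)⁻¹ * (2 * x α) * (x i * x j)) := by
  have hadd : ∀ v : E3, @HAdd.hAdd (E3 →L[ℝ] Mat3) (E3 →L[ℝ] Mat3) (E3 →L[ℝ] Mat3) _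
      ((vmvL x).comp (ContinuousLinearMap.id ℝ E3)) (vmvL.flip x) v = vmvL x v + vmvL v x :=
    fun v => rfl
  simp only [hadd, Dv, ContinuousLinearMap.smul_apply, ContinuousLinearMap.add_apply,
    ContinuousLinearMap.coe_comp', Function.comp_apply, ContinuousLinearMap.smulRight_apply,
    ContinuousLinearMap.one_apply, ContinuousLinearMap.flip_apply, ContinuousLinearMap.id_apply,
    innerSL_apply_apply, Matrix.smul_apply, Matrix.add_apply, vmvL_apply, smul_eq_mul,
    EuclideanSpace.single_apply, EuclideanSpace.inner_single_right, Pi.smul_apply,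
    ContinuousLinearMap.coe_smul', RCLike.conj_to_real, starRingEnd_apply, star_trivial]
  ring


set_option maxHeartbeats 1000000 in
lemma keyalg (s n u v w : ℝ) (hn : u^2+v^2+w^2 = n) (h0 : n ≠ 0) :
    (s * ((n * (u * 1 + 1 * u) - 2 * u * (u*u)) / n^2))^2 +
    (s * ((n * (u * 0 + 1 * v) - 2 * u * (u*v)) / n^2))^2 +
    (s * ((n * (u * 0 + 1 * w) - 2 * u * (u*w)) / n^2))^2 +
    (s * ((n * (v * 1 + 0 * u) - 2 * u * (v*u)) / n^2))^2 +
    (s * ((n * (v * 0 + 0 * v) - 2 * u * (v*v)) / n^2))^2 +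
    (s * ((n * (v * 0 + 0 * w) - 2 * u * (v*w)) / n^2))^2 +
    (s * ((n * (w * 1 + 0 * u) - 2 * u * (w*u)) / n^2))^2 +
    (s * ((n * (w * 0 + 0 * v) - 2 * u * (w*v)) / n^2))^2 +
    (s * ((n * (w * 0 + 0 * w) - 2 * u * (w*w)) / n^2))^2 +
    (s * ((n * (u * 0 + 0 * u) - 2 * v * (u*u)) / n^2))^2 +
    (s * ((n * (u * 1 + 0 * v) - 2 * v * (u*v)) / n^2))^2 +
    (s * ((n * (u * 0 + 0 * w) - 2 * v * (u*w)) / n^2))^2 +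
    (s * ((n * (v * 0 + 1 * u) - 2 * v * (v*u)) / n^2))^2 +
    (s * ((n * (v * 1 + 1 * v) - 2 * v * (v*v)) / n^2))^2 +
    (s * ((n * (v * 0 + 1 * w) - 2 * v * (v*w)) / n^2))^2 +
    (s * ((n * (w * 0 + 0 * u) - 2 * v * (w*u)) / n^2))^2 +
    (s * ((n * (w * 1 + 0 * v) - 2 * v * (w*v)) / n^2))^2 +
    (s * ((n * (w * 0 + 0 * w) - 2 * v * (w*w)) / n^2))^2 +
    (s * ((n * (u * 0 + 0 * u) - 2 * w * (u*u)) / n^2))^2 +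
    (s * ((n * (u * 0 + 0 * v) - 2 * w * (u*v)) / n^2))^2 +
    (s * ((n * (u * 1 + 0 * w) - 2 * w * (u*w)) / n^2))^2 +
    (s * ((n * (v * 0 + 0 * u) - 2 * w * (v*u)) / n^2))^2 +
    (s * ((n * (v * 0 + 0 * v) - 2 * w * (v*v)) / n^2))^2 +
    (s * ((n * (v * 1 + 0 * w) - 2 * w * (v*w)) / n^2))^2 +
    (s * ((n * (w * 0 + 1 * u) - 2 * w * (w*u)) / n^2))^2 +
    (s * ((n * (w * 0 + 1 * v) - 2 * w * (w*v)) / n^2))^2 +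
    (s * ((n * (w * 1 + 1 * w) - 2 * w * (w*w)) / n^2))^2 = 4*s^2/n := by
  field_simp
  linear_combination (s^2 * (4*(u^2+v^2+w^2)^2 - 4*n*(u^2+v^2+w^2) + 4*n^2)) * hn

lemma Dv_entry' (s : ℝ) (x : E3) (hx : x ≠ 0) (α i j : Fin 3) :
    Dv s x (EuclideanSpace.single α 1) i j =
      s * ((‖x‖ ^ 2 * (x i * (if j = α then 1 else 0) + (if i = α then 1 else 0) * x j)
        - 2 * x α * (x i * x j)) / (‖x‖ ^ 2) ^ 2) := by
  have hn : ‖x‖ ≠ 0 := norm_ne_zero_iff.mpr hx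
  rw [Dv_entry]
  have h2 : (‖x‖ ^ 2) ≠ 0 := pow_ne_zero 2 hn
  field_simp

set_option maxHeartbeats 1000000 in
lemma part1' (s : ℝ) (Φ : E3 → Mat3)
    (hΦ : ∀ x : E3, x ≠ 0 → Φ x = s • (outer (‖x‖⁻¹ • x) - (1 / 3 : ℝ) • (1 : Mat3)))
    (x : E3) (hx : x ≠ 0) :
    gradSq Φ x = 4 * s ^ 2 / ‖x‖ ^ 2 := by
  have hn : ‖x‖ ≠ 0 := norm_ne_zero_iff.mpr hx
  have hDf := part1 s Φ hΦ x hx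
  have hpd : ∀ α, pd Φ α x = Dv s x (EuclideanSpace.single α 1) := fun α => by
    rw [pd, hDf.fderiv]
  have hx2 : ‖x‖ ^ 2 = x 0 ^ 2 + x 1 ^ 2 + x 2 ^ 2 := by
    rw [EuclideanSpace.norm_eq, Real.sq_sqrt (by positivity)]
    simp [Fin.sum_univ_three, sq_abs]
  simp only [gradSq, frobSq, hpd, Dv_entry' s x hx, Fin.sum_univ_three]
  simp only [show ((0:Fin 3)=0)=True from by decide, show ((1:Fin 3)=1)=True from by decide,
    show ((2:Fin 3)=2)=True from by decide, show ((0:Fin 3)=1)=False from by decide,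
    show ((0:Fin 3)=2)=False from by decide, show ((1:Fin 3)=0)=False from by decide,
    show ((1:Fin 3)=2)=False from by decide, show ((2:Fin 3)=0)=False from by decide,
    show ((2:Fin 3)=1)=False from by decide, if_true, if_false]
  linear_combination keyalg s (‖x‖ ^ 2) (x 0) (x 1) (x 2) hx2.symm (pow_ne_zero 2 hn)


lemma vol_ball_one : (volume (Metric.ball (0 : E3) 1)).toReal = 4 * Real.pi / 3 := by
  rw [EuclideanSpace.volume_ball]
  have hG : Real.Gamma ((3 : ℕ) / 2 + 1) = 3 / 4 * Real.sqrt Real.pi := by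
    have h1 : ((3 : ℕ) : ℝ) / 2 + 1 = (3 / 2 : ℝ) + 1 := by norm_num
    rw [h1, Real.Gamma_add_one (by norm_num)]
    have h2 : (3 / 2 : ℝ) = 1 / 2 + 1 := by norm_num
    rw [h2, Real.Gamma_add_one (by norm_num), Real.Gamma_one_half_eq]
    ring
  have hπ : (0:ℝ) < Real.pi := Real.pi_pos
  have hsq : Real.sqrt Real.pi ^ 2 = Real.pi := Real.sq_sqrt hπ.le
  have hs0 : (0:ℝ) < Real.sqrt Real.pi := Real.sqrt_pos.mpr hπ
  rw [Fintype.card_fin, hG]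
  rw [ENNReal.toReal_mul, ENNReal.toReal_pow, ENNReal.toReal_ofReal (by norm_num),
    ENNReal.toReal_ofReal (by positivity)]
  rw [show Real.sqrt Real.pi ^ 3 = Real.pi * Real.sqrt Real.pi by
    rw [pow_succ, hsq]]
  field_simp

lemma ball_integral (s r : ℝ) (hr : 0 < r) :
    ∫ x in Metric.ball (0 : E3) r, 2 * s ^ 2 / ‖x‖ ^ 2 = 8 * Real.pi * s ^ 2 * r := by
  set f : ℝ → ℝ := Set.indicator (Set.Iio r) (fun y => 2 * s ^ 2 / y ^ 2) with hf
  have h1 : ∫ x in Metric.ball (0 : E3) r, 2 * s ^ 2 / ‖x‖ ^ 2 = ∫ x : E3, f ‖x‖ := by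
    rw [← integral_indicator measurableSet_ball]
    congr 1
    funext x
    by_cases h : ‖x‖ < r
    · simp [hf, Set.indicator, mem_ball_zero_iff, h]
    · simp [hf, Set.indicator, mem_ball_zero_iff, h]
  have h2 := MeasureTheory.integral_fun_norm_addHaar (volume : Measure E3) f
  have hdim : Module.finrank ℝ E3 = 3 := finrank_euclideanSpace_fin
  rw [hdim] at h2
  have h3 : ∫ y in Set.Ioi (0:ℝ), y ^ (3 - 1) • f y = 2 * s ^ 2 * r := by
    have heq : ∀ y : ℝ, y ^ (3-1) • f y
        = Set.indicator (Set.Iio r) (fun y => y ^ 2 * (2 * s ^ 2 / y ^ 2)) y := by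
      intro y
      by_cases h : y ∈ Set.Iio r
      · simp [hf, Set.indicator, h]
      · simp [hf, Set.indicator, h]
    simp only [heq]
    rw [setIntegral_indicator measurableSet_Iio, Set.Ioi_inter_Iio]
    rw [setIntegral_congr_fun measurableSet_Ioo
      (g := fun _ => 2 * s ^ 2) (fun y hy => by
        have : y ≠ 0 := ne_of_gt hy.1
        field_simp)]
    rw [setIntegral_const, Real.volume_real_Ioo_of_le hr.le]
    simp [smul_eq_mul]; ring
  rw [h1, h2, h3, measureReal_def, vol_ball_one]
  simp only [smul_eq_mul, nsmul_eq_mul]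
  push_cast
  ring

/-- the hedgehog map `Φ(x) = s₊((x/|x|)⊗(x/|x|) − (1/3)Id)` is differentiable away
from the origin with `|∇Φ(x)|² = 4s₊²/|x|²`, and `∫_{B_r} ½|∇Φ|² dx = 8π s₊² r` for all `r > 0`. -/
theorem stmt7 (s : ℝ) (hs : 0 < s) (Φ : E3 → Mat3)
    (hΦ : ∀ x : E3, x ≠ 0 → Φ x = s • (outer (‖x‖⁻¹ • x) - (1 / 3 : ℝ) • (1 : Mat3))) :
    (∀ x : E3, x ≠ 0 → DifferentiableAt ℝ Φ x ∧ gradSq Φ x = 4 * s ^ 2 / ‖x‖ ^ 2) ∧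
    (∀ r : ℝ, 0 < r →
      ∫ x in Metric.ball (0 : E3) r, gradSq Φ x / 2 = 8 * Real.pi * s ^ 2 * r) := by
  have hpart1 : ∀ x : E3, x ≠ 0 →
      DifferentiableAt ℝ Φ x ∧ gradSq Φ x = 4 * s ^ 2 / ‖x‖ ^ 2 :=
    fun x hx => ⟨(part1 s Φ hΦ x hx).differentiableAt, part1' s Φ hΦ x hx⟩
  refine ⟨hpart1, fun r hr => ?_⟩
  have hae : ∀ᵐ x : E3, x ∈ Metric.ball (0 : E3) r →
      gradSq Φ x / 2 = 2 * s ^ 2 / ‖x‖ ^ 2 := by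
    rw [ae_iff]
    refine measure_mono_null (fun x hx => ?_) (measure_singleton (0 : E3))
    simp only [Set.mem_setOf_eq, Set.mem_singleton_iff] at *
    by_contra h
    exact hx fun _ => by rw [(hpart1 x h).2]; ring
  rw [MeasureTheory.setIntegral_congr_ae measurableSet_ball hae, ball_integral s r hr]

end
end

section
/- Let U ⊂ ℝ³ be open, let n : U → ℝ³ be C¹ with |n(x)| = 1 for all x, and set P(x) = s₊(n(x)⊗n(x) − (1/3)Id). Then for every x ∈ U and every direction v ∈ ℝ³, the matrix A(x) := −(2/s₊²)|∇P(x)|² P(x) + (2/s₊)[Σ_{α=1}^3 (∂_αP(x))² − (1/3)|∇P(x)|² Id] is Frobenius-orthogonal to the directional derivative ∂_vP(x) := Σ_α v_α ∂_αP(x), i.e. tr(A(x)·(∂_vP(x))ᵀ) = 0. -/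
open MeasureTheory Matrix Metric Filter
open scoped RealInnerProductSpace

noncomputable section

attribute [local instance] Matrix.frobeniusNormedAddCommGroup Matrix.frobeniusNormedSpace

/-- The outer-product bilinear map, as a linear map into matrices. -/
def bilL : E3 →ₗ[ℝ] E3 →ₗ[ℝ] Mat3 :=
  LinearMap.mk₂ ℝ (fun u v => Matrix.of fun i j => u i * v j)
    (by intro a b c; ext i j; simp [add_mul])
    (by intro c a b; ext i j; simp [Matrix.smul_apply]; ring)
    (by intro a b c; ext i j; simp [mul_add])
    (by intro c a b; ext i j; simp [Matrix.smul_apply]; ring)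

/-- The outer-product bilinear map, as a continuous bilinear map into matrices. -/
def bilC : E3 →L[ℝ] E3 →L[ℝ] Mat3 :=
  LinearMap.toContinuousLinearMap
    ((LinearMap.toContinuousLinearMap :
        (E3 →ₗ[ℝ] Mat3) ≃ₗ[ℝ] (E3 →L[ℝ] Mat3)).toLinearMap ∘ₗ bilL)

@[simp] lemma bilC_apply (u v : E3) (i j : Fin 3) : bilC u v i j = u i * v j := rfl

/-- for `P = s₊(n⊗n − (1/3)Id)` with `n : U → S²` of class `C¹`, the matrix
`A = −(2/s₊²)|∇P|²P + (2/s₊)[∑_α(∂_αP)² − (1/3)|∇P|²Id]` is Frobenius-orthogonal to every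
directional derivative `∂_vP(x)`. -/
theorem stmt9 (s : ℝ) (hs : 0 < s) (U : Set E3) (hU : IsOpen U)
    (n : E3 → E3) (hn : ContDiffOn ℝ 1 n U) (hunit : ∀ x ∈ U, ‖n x‖ = 1)
    (P : E3 → Mat3) (hP : ∀ x, P x = s • (outer (n x) - (1 / 3 : ℝ) • (1 : Mat3))) :
    ∀ x ∈ U, ∀ v : Fin 3 → ℝ,
      (((-(2 / s ^ 2) * gradSq P x) • P x
          + (2 / s) • ((∑ α, pd P α x * pd P α x) - (gradSq P x / 3) • (1 : Mat3)))
        * (∑ α, v α • pd P α x)ᵀ).trace = 0 := by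
  intro x hx v
  have hdn : DifferentiableAt ℝ n x := (hn.contDiffAt (hU.mem_nhds hx)).differentiableAt one_ne_zero
  set m : Fin 3 → Fin 3 → ℝ := fun α => fderiv ℝ n x (EuclideanSpace.single α 1) with hm
  -- orthogonality of n and its derivative
  have horth : ∀ h : E3, ∑ i, n x i * fderiv ℝ n x h i = 0 := by
    intro h
    have hproj : ∀ i : Fin 3, HasFDerivAt (fun y => n y i)
        ((EuclideanSpace.proj i : E3 →L[ℝ] ℝ).comp (fderiv ℝ n x)) x := by
      intro i
      exact ((EuclideanSpace.proj (𝕜 := ℝ) i).hasFDerivAt.comp x hdn.hasFDerivAt : _)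
    have hsq : HasFDerivAt (fun y => ∑ i, (n y i) * (n y i))
        (∑ i : Fin 3, ((n x i) • ((EuclideanSpace.proj i : E3 →L[ℝ] ℝ).comp (fderiv ℝ n x))
          + (n x i) • ((EuclideanSpace.proj i : E3 →L[ℝ] ℝ).comp (fderiv ℝ n x)))) x :=
      HasFDerivAt.fun_sum fun i _ => (hproj i).mul (hproj i)
    have hconst : (fun y => ∑ i, (n y i) * (n y i)) =ᶠ[nhds x] fun _ => (1 : ℝ) := by
      filter_upwards [hU.mem_nhds hx] with y hy
      have h1 : ‖n y‖ = 1 := hunit y hy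
      have h2 : ‖n y‖ ^ 2 = 1 := by rw [h1]; norm_num
      rw [EuclideanSpace.norm_eq] at h2
      rw [Real.sq_sqrt (by positivity)] at h2
      rw [← h2]; congr 1; funext i; rw [Real.norm_eq_abs, sq_abs]; ring
    have h0 : fderiv ℝ (fun y => ∑ i, (n y i) * (n y i)) x = 0 := by
      rw [hconst.fderiv_eq]; exact fderiv_const_apply 1
    have heq := hsq.fderiv
    rw [h0] at heq
    have h2 : (0 : E3 →L[ℝ] ℝ) h = _ := congrFun (congrArg _ heq) h
    simp only [ContinuousLinearMap.sum_apply, ContinuousLinearMap.add_apply,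
      ContinuousLinearMap.smul_apply, ContinuousLinearMap.comp_apply,
      ContinuousLinearMap.zero_apply, PiLp.proj_apply, smul_eq_mul] at h2
    have h3 : ∑ i : Fin 3, n x i * (fderiv ℝ n x) h i =
        (∑ i : Fin 3, (n x i * (fderiv ℝ n x) h i + n x i * (fderiv ℝ n x) h i)) / 2 := by
      rw [Finset.sum_div]; congr 1; funext i; ring
    rw [h3, ← h2]; norm_num
  have hNM : ∀ α : Fin 3, n x 0 * m α 0 + n x 1 * m α 1 + n x 2 * m α 2 = 0 := by
    intro α
    have := horth (EuclideanSpace.single α 1)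
    rw [Fin.sum_univ_three] at this
    exact this
  -- formula for pd P α x
  have hpd : ∀ α : Fin 3, pd P α x
      = Matrix.of fun i j => s * (n x i * m α j + m α i * n x j) := by
    intro α
    have hq : HasFDerivAt (fun y => bilC (n y) (n y))
        ((bilC.precompR E3 (n x) (fderiv ℝ n x)) + (bilC.precompL E3 (fderiv ℝ n x) (n x))) x :=
      bilC.hasFDerivAt_of_bilinear hdn.hasFDerivAt hdn.hasFDerivAt
    have hPe : P = fun y => s • (bilC (n y) (n y) - (1/3 : ℝ) • (1 : Mat3)) := by
      funext y; rw [hP y]; rfl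
    have hP' : HasFDerivAt P
        (s • ((bilC.precompR E3 (n x) (fderiv ℝ n x))
          + (bilC.precompL E3 (fderiv ℝ n x) (n x)))) x := by
      rw [hPe]
      exact ((hq.sub_const _).const_smul s)
    have h1 : pd P α x = s • (bilC (n x) (WithLp.toLp 2 (m α)) + bilC (WithLp.toLp 2 (m α)) (n x)) := by
      rw [pd]; erw [hP'.fderiv]
      simp [hm]
      rfl
    rw [h1]
    ext i j
    simp [Matrix.smul_apply, Matrix.add_apply]
  have tB : (∑ α, v α • pd P α x).trace = 0 := by
    simp only [hpd, Matrix.trace, Matrix.diag, Fin.sum_univ_three, Matrix.smul_apply,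
      Matrix.add_apply, Matrix.of_apply, smul_eq_mul]
    linear_combination (2*s*v 0) * hNM 0 + (2*s*v 1) * hNM 1 + (2*s*v 2) * hNM 2
  have tP : (P x * (∑ α, v α • pd P α x)ᵀ).trace = 0 := by
    rw [hP x]
    simp only [hpd, Matrix.trace, Matrix.diag, Fin.sum_univ_three, Matrix.mul_apply,
      Matrix.transpose_apply, Matrix.smul_apply, Matrix.add_apply, Matrix.sub_apply,
      Matrix.of_apply, Matrix.one_apply, outer, smul_eq_mul, Fin.reduceEq, reduceIte]
    linear_combination (s^2 * v 0 * (2*(n x 0 * n x 0 + n x 1 * n x 1 + n x 2 * n x 2) - 2/3)) * hNM 0 + (s^2 * v 1 * (2*(n x 0 * n x 0 + n x 1 * n x 1 + n x 2 * n x 2) - 2/3)) * hNM 1 + (s^2 * v 2 * (2*(n x 0 * n x 0 + n x 1 * n x 1 + n x 2 * n x 2) - 2/3)) * hNM 2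
  have tS : ((∑ α, pd P α x * pd P α x) * (∑ α, v α • pd P α x)ᵀ).trace = 0 := by
    simp only [hpd, Matrix.trace, Matrix.diag, Fin.sum_univ_three, Matrix.mul_apply,
      Matrix.transpose_apply, Matrix.smul_apply, Matrix.add_apply, Matrix.of_apply, smul_eq_mul]
    linear_combination (s^3 * v 0 * (4*(n x 0 * n x 0 + n x 1 * n x 1 + n x 2 * n x 2)*(m 0 0 * m 0 0 + m 0 1 * m 0 1 + m 0 2 * m 0 2) + 2*(n x 0 * m 0 0 + n x 1 * m 0 1 + n x 2 * m 0 2)*(n x 0 * m 0 0 + n x 1 * m 0 1 + n x 2 * m 0 2))) * hNM 0 +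
      (s^3 * v 0 * 2 * (m 0 0 * m 0 0 + m 0 1 * m 0 1 + m 0 2 * m 0 2) * (n x 0 * n x 0 + n x 1 * n x 1 + n x 2 * n x 2)) * hNM 0 +
      (s^3 * v 1 * (4*(n x 0 * n x 0 + n x 1 * n x 1 + n x 2 * n x 2)*(m 0 0 * m 1 0 + m 0 1 * m 1 1 + m 0 2 * m 1 2) + 2*(n x 0 * m 0 0 + n x 1 * m 0 1 + n x 2 * m 0 2)*(n x 0 * m 1 0 + n x 1 * m 1 1 + n x 2 * m 1 2))) * hNM 0 +
      (s^3 * v 1 * 2 * (m 0 0 * m 0 0 + m 0 1 * m 0 1 + m 0 2 * m 0 2) * (n x 0 * n x 0 + n x 1 * n x 1 + n x 2 * n x 2)) * hNM 1 +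
      (s^3 * v 2 * (4*(n x 0 * n x 0 + n x 1 * n x 1 + n x 2 * n x 2)*(m 0 0 * m 2 0 + m 0 1 * m 2 1 + m 0 2 * m 2 2) + 2*(n x 0 * m 0 0 + n x 1 * m 0 1 + n x 2 * m 0 2)*(n x 0 * m 2 0 + n x 1 * m 2 1 + n x 2 * m 2 2))) * hNM 0 +
      (s^3 * v 2 * 2 * (m 0 0 * m 0 0 + m 0 1 * m 0 1 + m 0 2 * m 0 2) * (n x 0 * n x 0 + n x 1 * n x 1 + n x 2 * n x 2)) * hNM 2 +
      (s^3 * v 0 * (4*(n x 0 * n x 0 + n x 1 * n x 1 + n x 2 * n x 2)*(m 1 0 * m 0 0 + m 1 1 * m 0 1 + m 1 2 * m 0 2) + 2*(n x 0 * m 1 0 + n x 1 * m 1 1 + n x 2 * m 1 2)*(n x 0 * m 0 0 + n x 1 * m 0 1 + n x 2 * m 0 2))) * hNM 1 +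
      (s^3 * v 0 * 2 * (m 1 0 * m 1 0 + m 1 1 * m 1 1 + m 1 2 * m 1 2) * (n x 0 * n x 0 + n x 1 * n x 1 + n x 2 * n x 2)) * hNM 0 +
      (s^3 * v 1 * (4*(n x 0 * n x 0 + n x 1 * n x 1 + n x 2 * n x 2)*(m 1 0 * m 1 0 + m 1 1 * m 1 1 + m 1 2 * m 1 2) + 2*(n x 0 * m 1 0 + n x 1 * m 1 1 + n x 2 * m 1 2)*(n x 0 * m 1 0 + n x 1 * m 1 1 + n x 2 * m 1 2))) * hNM 1 +
      (s^3 * v 1 * 2 * (m 1 0 * m 1 0 + m 1 1 * m 1 1 + m 1 2 * m 1 2) * (n x 0 * n x 0 + n x 1 * n x 1 + n x 2 * n x 2)) * hNM 1 +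
      (s^3 * v 2 * (4*(n x 0 * n x 0 + n x 1 * n x 1 + n x 2 * n x 2)*(m 1 0 * m 2 0 + m 1 1 * m 2 1 + m 1 2 * m 2 2) + 2*(n x 0 * m 1 0 + n x 1 * m 1 1 + n x 2 * m 1 2)*(n x 0 * m 2 0 + n x 1 * m 2 1 + n x 2 * m 2 2))) * hNM 1 +
      (s^3 * v 2 * 2 * (m 1 0 * m 1 0 + m 1 1 * m 1 1 + m 1 2 * m 1 2) * (n x 0 * n x 0 + n x 1 * n x 1 + n x 2 * n x 2)) * hNM 2 +
      (s^3 * v 0 * (4*(n x 0 * n x 0 + n x 1 * n x 1 + n x 2 * n x 2)*(m 2 0 * m 0 0 + m 2 1 * m 0 1 + m 2 2 * m 0 2) + 2*(n x 0 * m 2 0 + n x 1 * m 2 1 + n x 2 * m 2 2)*(n x 0 * m 0 0 + n x 1 * m 0 1 + n x 2 * m 0 2))) * hNM 2 +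
      (s^3 * v 0 * 2 * (m 2 0 * m 2 0 + m 2 1 * m 2 1 + m 2 2 * m 2 2) * (n x 0 * n x 0 + n x 1 * n x 1 + n x 2 * n x 2)) * hNM 0 +
      (s^3 * v 1 * (4*(n x 0 * n x 0 + n x 1 * n x 1 + n x 2 * n x 2)*(m 2 0 * m 1 0 + m 2 1 * m 1 1 + m 2 2 * m 1 2) + 2*(n x 0 * m 2 0 + n x 1 * m 2 1 + n x 2 * m 2 2)*(n x 0 * m 1 0 + n x 1 * m 1 1 + n x 2 * m 1 2))) * hNM 2 +
      (s^3 * v 1 * 2 * (m 2 0 * m 2 0 + m 2 1 * m 2 1 + m 2 2 * m 2 2) * (n x 0 * n x 0 + n x 1 * n x 1 + n x 2 * n x 2)) * hNM 1 +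
      (s^3 * v 2 * (4*(n x 0 * n x 0 + n x 1 * n x 1 + n x 2 * n x 2)*(m 2 0 * m 2 0 + m 2 1 * m 2 1 + m 2 2 * m 2 2) + 2*(n x 0 * m 2 0 + n x 1 * m 2 1 + n x 2 * m 2 2)*(n x 0 * m 2 0 + n x 1 * m 2 1 + n x 2 * m 2 2))) * hNM 2 +
      (s^3 * v 2 * 2 * (m 2 0 * m 2 0 + m 2 1 * m 2 1 + m 2 2 * m 2 2) * (n x 0 * n x 0 + n x 1 * n x 1 + n x 2 * n x 2)) * hNM 2
  simp only [Matrix.add_mul, Matrix.sub_mul, Matrix.smul_mul, Matrix.one_mul, Matrix.trace_add,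
    Matrix.trace_sub, Matrix.trace_smul, Matrix.trace_transpose, tP, tS, tB, smul_zero,
    add_zero, sub_zero, zero_sub, neg_zero]


end
end

section
/- Let U ⊂ ℝ³ be open, let n : U → ℝ³ be C¹ with |n(x)| = 1 for all x, and set P(x) = s₊(n(x)⊗n(x) − (1/3)Id). Then at every x ∈ U the matrix Σ_{α=1}^3 (∂_αP(x))² commutes with P(x): P(x)·Σ_α(∂_αP(x))² = Σ_α(∂_αP(x))²·P(x). -/
open MeasureTheory Matrix Metric Filter
open scoped RealInnerProductSpace

noncomputable section

attribute [local instance] Matrix.frobeniusNormedAddCommGroup Matrix.frobeniusNormedSpace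

lemma vmv_mul' (a b c d : Fin 3 → ℝ) :
    vecMulVec a b * vecMulVec c d = (∑ k, b k * c k) • vecMulVec a d := by
  ext i j
  simp only [Matrix.mul_apply, Matrix.vecMulVec_apply, Matrix.smul_apply, smul_eq_mul,
    Finset.sum_mul]
  exact Finset.sum_congr rfl fun k _ => by ring

lemma key_comm' (s : ℝ) (u w : Fin 3 → ℝ) (hu : ∑ i, u i * u i = 1)
    (h2 : ∑ i, u i * w i = 0) :
    (s • (outer u - (1/3:ℝ) • (1:Mat3))) *
      ((vecMulVec u w + vecMulVec w u) * (vecMulVec u w + vecMulVec w u))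
      = ((vecMulVec u w + vecMulVec w u) * (vecMulVec u w + vecMulVec w u)) *
        (s • (outer u - (1/3:ℝ) • (1:Mat3))) := by
  have h2' : ∑ k, w k * u k = 0 := by
    rw [← h2]; exact Finset.sum_congr rfl fun k _ => mul_comm _ _
  have houter : outer u = vecMulVec u u := rfl
  have hS : (vecMulVec u w + vecMulVec w u) * (vecMulVec u w + vecMulVec w u)
      = vecMulVec w w + (∑ k, w k * w k) • vecMulVec u u := by
    rw [add_mul, mul_add, mul_add, vmv_mul', vmv_mul', vmv_mul', vmv_mul', h2, h2', hu]
    simp only [zero_smul, one_smul, zero_add, add_zero]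
    abel
  rw [houter, hS]
  simp only [sub_mul, mul_sub, add_mul, mul_add, smul_mul_assoc, mul_smul_comm,
    vmv_mul', Matrix.one_mul, Matrix.mul_one, hu, h2, h2', one_smul, zero_smul, smul_smul]
  module

def vmvBil : E3 →ₗ[ℝ] E3 →ₗ[ℝ] Mat3 :=
  LinearMap.mk₂ ℝ (fun v w => vecMulVec v w)
    (fun a b c => by ext i j; simp [vecMulVec_apply]; ring)
    (fun r a c => by ext i j; simp [vecMulVec_apply]; ring)
    (fun a b c => by ext i j; simp [vecMulVec_apply]; ring)
    (fun r a c => by ext i j; simp [vecMulVec_apply]; ring)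

def vmvCLM : E3 →L[ℝ] E3 →L[ℝ] Mat3 :=
  LinearMap.toContinuousLinearMap
    ((LinearMap.toContinuousLinearMap :
        (E3 →ₗ[ℝ] Mat3) ≃ₗ[ℝ] (E3 →L[ℝ] Mat3)).toLinearMap.comp vmvBil)

@[simp] lemma vmvCLM_apply (v w : E3) : vmvCLM v w = vecMulVec v w := rfl


/-- for `P = s₊(n⊗n − (1/3)Id)` with `n : U → S²` of class `C¹`, the matrix
`∑_α (∂_αP(x))²` commutes with `P(x)` at every `x ∈ U`. -/
theorem stmt10 (s : ℝ) (hs : 0 < s) (U : Set E3) (hU : IsOpen U)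
    (n : E3 → E3) (hn : ContDiffOn ℝ 1 n U) (hunit : ∀ x ∈ U, ‖n x‖ = 1)
    (P : E3 → Mat3) (hP : ∀ x, P x = s • (outer (n x) - (1 / 3 : ℝ) • (1 : Mat3))) :
    ∀ x ∈ U, P x * (∑ α, pd P α x * pd P α x) = (∑ α, pd P α x * pd P α x) * P x := by
  intro x hx
  have hmem : U ∈ nhds x := hU.mem_nhds hx
  have hdn : DifferentiableAt ℝ n x :=
    ((hn.differentiableOn one_ne_zero) x hx).differentiableAt hmem
  have hn' : HasFDerivAt n (fderiv ℝ n x) x := hdn.hasFDerivAt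
  have hsq : HasFDerivAt (fun y => vmvCLM (n y) (n y))
      ((vmvCLM.isBoundedBilinearMap.deriv (n x, n x)).comp
        ((fderiv ℝ n x).prod (fderiv ℝ n x))) x :=
    by have := (vmvCLM.isBoundedBilinearMap.hasFDerivAt (n x, n x)).comp x (HasFDerivAt.prodMk hn' hn'); exact this
  have hPfun : P = fun y => s • (vmvCLM (n y) (n y) - (1/3:ℝ) • (1:Mat3)) := by
    funext y; rw [hP y]; rfl
  have hPderiv : HasFDerivAt P
      (s • (((vmvCLM.isBoundedBilinearMap.deriv (n x, n x)).comp
        ((fderiv ℝ n x).prod (fderiv ℝ n x))))) x := by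
    rw [hPfun]; exact (hsq.sub_const _).const_smul s
  -- unit norm facts
  have hu : ∑ i, (n x) i * (n x) i = 1 := by
    have h1 : ⟪n x, n x⟫ = 1 := by
      rw [real_inner_self_eq_norm_sq, hunit x hx]; norm_num
    rw [← h1, PiLp.inner_apply]; simp [RCLike.inner_apply, sq]
  -- orthogonality
  have hconst : fderiv ℝ (fun y => ⟪n y, n y⟫) x = 0 := by
    have heq : (fun y => ⟪n y, n y⟫) =ᶠ[nhds x] fun _ => (1:ℝ) := by
      filter_upwards [hmem] with y hy
      rw [real_inner_self_eq_norm_sq, hunit y hy]; norm_num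
    rw [Filter.EventuallyEq.fderiv_eq heq]
    exact fderiv_const_apply 1
  have hinnerD : HasFDerivAt (fun y => ⟪n y, n y⟫)
      ((fderivInnerCLM ℝ (n x, n x)).comp ((fderiv ℝ n x).prod (fderiv ℝ n x))) x :=
    hn'.inner ℝ hn'
  -- per-direction computation
  rw [Finset.mul_sum, Finset.sum_mul]
  refine Finset.sum_congr rfl fun α _ => ?_
  set m : E3 := fderiv ℝ n x (EuclideanSpace.single α 1) with hm
  have h2 : ∑ i, (n x) i * m i = 0 := by
    have h0 : ((fderivInnerCLM ℝ (n x, n x)).comp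
        ((fderiv ℝ n x).prod (fderiv ℝ n x))) (EuclideanSpace.single α 1) = 0 := by
      rw [← hinnerD.fderiv, hconst]; rfl
    simp only [ContinuousLinearMap.comp_apply, ContinuousLinearMap.prod_apply,
      fderivInnerCLM_apply, ← hm] at h0
    have : (2:ℝ) * ∑ i, (n x) i * m i = 0 := by
      rw [← h0, PiLp.inner_apply, PiLp.inner_apply]
      simp [RCLike.inner_apply]
      ring_nf
      rw [Finset.sum_congr rfl fun i _ => mul_comm (m i) ((n x) i)]
      ring
    linarith
  have hpd : pd P α x = s • (vecMulVec (n x) m + vecMulVec m (n x)) := by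
    show fderiv ℝ P x (EuclideanSpace.single α 1) = _
    erw [hPderiv.fderiv]
    simp only [ContinuousLinearMap.smul_apply, ContinuousLinearMap.comp_apply,
      ContinuousLinearMap.prod_apply, IsBoundedBilinearMap.deriv_apply, vmvCLM_apply, ← hm]
    rfl
  have hsmul : (s • (vecMulVec (n x) m + vecMulVec m (n x))) *
      (s • (vecMulVec (n x) m + vecMulVec m (n x)))
      = (s*s) • ((vecMulVec (n x) m + vecMulVec m (n x)) *
        (vecMulVec (n x) m + vecMulVec m (n x))) := by
    rw [smul_mul_assoc, mul_smul_comm, smul_smul]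
  rw [hpd, hP x, hsmul, mul_smul_comm (s*s), smul_mul_assoc (s*s),
    key_comm' s (n x) m hu h2]

end
end

section
/- Let U ⊂ ℝ³∖{0} be open and let P : U → ℝ^m be C². Define Φ : U → ℝ³ by Φ_α(x) = ⟨∂_αP(x), (∂P/∂r)(x)⟩ − ½|∇P(x)|² x_α/|x|, where ⟨·,·⟩ is the Euclidean inner product on ℝ^m. Then Φ is C¹ on U and at every x ∈ U one has the pointwise identity Σ_{α=1}^3 ∂_αΦ_α(x) = ⟨ΔP(x), (∂P/∂r)(x)⟩ − (1/|x|)|(∂P/∂r)(x)|², where Δ acts componentwise; equivalently ⟨ΔP, ∂P/∂r⟩ = (1/|x|)|∂P/∂r|² + div Φ. -/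
open MeasureTheory Matrix Metric Filter
open scoped RealInnerProductSpace

noncomputable section

attribute [local instance] Matrix.frobeniusNormedAddCommGroup Matrix.frobeniusNormedSpace

/-- Partial derivative `∂_α P(x)` of a map with values in `ℝ^m`. -/
def pdF {m : ℕ} (P : E3 → EuclideanSpace ℝ (Fin m)) (α : Fin 3) (x : E3) :
    EuclideanSpace ℝ (Fin m) := fderiv ℝ P x (EuclideanSpace.single α 1)

/-- `|∇P(x)|²` for a map with values in `ℝ^m`. -/
def gradSqF {m : ℕ} (P : E3 → EuclideanSpace ℝ (Fin m)) (x : E3) : ℝ :=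
  ∑ α, ‖pdF P α x‖ ^ 2

/-- Radial derivative `(∂P/∂r)(x)` for a map with values in `ℝ^m`. -/
def radDF {m : ℕ} (P : E3 → EuclideanSpace ℝ (Fin m)) (x : E3) :
    EuclideanSpace ℝ (Fin m) := ‖x‖⁻¹ • ∑ α, (x α) • pdF P α x

/-- Componentwise Laplacian for a map with values in `ℝ^m`. -/
def lapF {m : ℕ} (P : E3 → EuclideanSpace ℝ (Fin m)) (x : E3) :
    EuclideanSpace ℝ (Fin m) :=
  ∑ α, fderiv ℝ (fun y => pdF P α y) x (EuclideanSpace.single α 1)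

set_option maxHeartbeats 1000000 in
/-- for a `C²` map `P : U → ℝ^m` with `U ⊆ ℝ³∖{0}` open, the vector field
`Φ_α = ⟨∂_αP, ∂P/∂r⟩ − ½|∇P|²x_α/|x|` is `C¹` on `U` and satisfies
`div Φ = ⟨ΔP, ∂P/∂r⟩ − (1/|x|)|∂P/∂r|²` pointwise on `U`. -/
theorem stmt11 (m : ℕ) (U : Set E3) (hU : IsOpen U) (hU0 : (0 : E3) ∉ U)
    (P : E3 → EuclideanSpace ℝ (Fin m)) (hP : ContDiffOn ℝ 2 P U)
    (Φ : E3 → Fin 3 → ℝ)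
    (hΦ : ∀ x : E3, ∀ α : Fin 3,
      Φ x α = ⟪pdF P α x, radDF P x⟫ - gradSqF P x / 2 * (x α / ‖x‖)) :
    (∀ α : Fin 3, ContDiffOn ℝ 1 (fun x => Φ x α) U) ∧
    ∀ x ∈ U,
      ∑ α, fderiv ℝ (fun y => Φ y α) x (EuclideanSpace.single α 1)
        = ⟪lapF P x, radDF P x⟫ - ‖x‖⁻¹ * ‖radDF P x‖ ^ 2 := by
  have hne : ∀ y ∈ U, y ≠ 0 := fun y hy h => hU0 (h ▸ hy)
  have hfd : ContDiffOn ℝ 1 (fun y => fderiv ℝ P y) U := hP.fderiv_of_isOpen hU (by norm_num)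
  have hpdC1 : ∀ β : Fin 3, ContDiffOn ℝ 1 (fun y => pdF P β y) U := fun β =>
    hfd.clm_apply contDiffOn_const
  have hninvC1 : ContDiffOn ℝ 1 (fun y : E3 => ‖y‖⁻¹) U := fun y hy =>
    (((contDiffAt_norm ℝ (hne y hy)).inv (norm_ne_zero_iff.2 (hne y hy)))).contDiffWithinAt
  have hcoordC1 : ∀ β : Fin 3, ContDiff ℝ 1 (fun y : E3 => y β) := fun β =>
    (EuclideanSpace.proj β : E3 →L[ℝ] ℝ).contDiff
  have hradC1 : ContDiffOn ℝ 1 (fun y => radDF P y) U :=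
    hninvC1.smul (ContDiffOn.sum fun β _ => ((hcoordC1 β).contDiffOn).smul (hpdC1 β))
  have hgradC1 : ContDiffOn ℝ 1 (fun y => gradSqF P y) U := by
    refine ContDiffOn.sum fun β _ => ?_
    exact ((hpdC1 β).inner ℝ (hpdC1 β)).congr fun y _ => (real_inner_self_eq_norm_sq _).symm
  have hΦC1 : ∀ α : Fin 3, ContDiffOn ℝ 1 (fun x => Φ x α) U := by
    intro α
    have he : (fun x => Φ x α)
        = fun y => ⟪pdF P α y, radDF P y⟫ - 2⁻¹ * gradSqF P y * (y α * ‖y‖⁻¹) := by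
      funext y; rw [hΦ y α]; ring
    rw [he]
    exact ((hpdC1 α).inner ℝ hradC1).sub ((contDiffOn_const.mul hgradC1).mul
      (((hcoordC1 α).contDiffOn).mul hninvC1))
  refine ⟨hΦC1, ?_⟩
  intro x hx
  have hxne : x ≠ 0 := hne x hx
  have hnx : ‖x‖ ≠ 0 := norm_ne_zero_iff.2 hxne
  set v : Fin 3 → E3 := fun α => EuclideanSpace.single α 1 with hv
  have hPx : ContDiffAt ℝ 2 P x := hP.contDiffAt (hU.mem_nhds hx)
  have hfd1 : ContDiffAt ℝ 1 (fderiv ℝ P) x := hPx.fderiv_right (le_refl 2)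
  set F'' := fderiv ℝ (fderiv ℝ P) x with hF''def
  have hF'' : HasFDerivAt (fderiv ℝ P) F'' x :=
    (hfd1.differentiableAt one_ne_zero).hasFDerivAt
  have hsym : ∀ α β, F'' (v α) (v β) = F'' (v β) (v α) := fun α β =>
    (hPx.isSymmSndFDerivAt (by simp)) (v α) (v β)
  set D : Fin 3 → E3 →L[ℝ] EuclideanSpace ℝ (Fin m) := fun β =>
    (ContinuousLinearMap.apply ℝ (EuclideanSpace ℝ (Fin m)) (v β)).comp F'' with hD
  have hgd : ∀ β, HasFDerivAt (fun y => pdF P β y) (D β) x := fun β =>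
    (ContinuousLinearMap.apply ℝ (EuclideanSpace ℝ (Fin m)) (v β)).hasFDerivAt.comp x hF''

  have hlap : lapF P x = ∑ α, F'' (v α) (v α) := by
    unfold lapF
    exact Finset.sum_congr rfl fun α _ => by rw [(hgd α).fderiv]; rfl
  set Sx : EuclideanSpace ℝ (Fin m) := ∑ β, x β • pdF P β x with hSx
  set S' : E3 →L[ℝ] EuclideanSpace ℝ (Fin m) :=
    ∑ β, ((x β) • D β + (EuclideanSpace.proj β : E3 →L[ℝ] ℝ).smulRight (pdF P β x)) with hS'
  have hS : HasFDerivAt (fun y => ∑ β, (y β) • pdF P β y) S' x :=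
    HasFDerivAt.fun_sum fun β _ =>
      (EuclideanSpace.proj β : E3 →L[ℝ] ℝ).hasFDerivAt.smul (hgd β)
  have hninv : HasFDerivAt (fun y : E3 => ‖y‖⁻¹) ((-(‖x‖^3)⁻¹) • innerSL ℝ x) x := by
    have h1 : HasFDerivAt (fun y : E3 => ‖y‖^2) ((2:ℕ) • innerSL ℝ x) x := by
      simpa using (hasFDerivAt_id x).norm_sq
    have hpos : (0:ℝ) < ‖x‖^2 := by positivity
    have hsq : HasDerivAt (fun t : ℝ => (Real.sqrt t)⁻¹)
        (-(1/(2*Real.sqrt (‖x‖^2)))/(Real.sqrt (‖x‖^2))^2) (‖x‖^2) :=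
      (Real.hasDerivAt_sqrt hpos.ne').inv (by positivity)
    have h2 := hsq.comp_hasFDerivAt x h1
    have h3 : HasFDerivAt (fun y : E3 => ‖y‖⁻¹)
        ((-(1/(2*Real.sqrt (‖x‖^2)))/(Real.sqrt (‖x‖^2))^2) • (2:ℕ) • innerSL ℝ x) x := by
      refine h2.congr_of_eventuallyEq (Filter.Eventually.of_forall fun y => ?_)
      simp [Function.comp, Real.sqrt_sq (norm_nonneg y)]
    refine h3.congr_fderiv (Eq.symm ?_)
    rw [Real.sqrt_sq (norm_nonneg x)]
    ext w
    simp only [ContinuousLinearMap.smul_apply, innerSL_apply_apply, smul_eq_mul, nsmul_eq_mul,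
      Nat.cast_ofNat]
    field_simp
  set R' : E3 →L[ℝ] EuclideanSpace ℝ (Fin m) :=
    ‖x‖⁻¹ • S' + ((-(‖x‖^3)⁻¹) • innerSL ℝ x).smulRight Sx with hR'
  have hR : HasFDerivAt (fun y => radDF P y) R' x := hninv.smul hS
  set G' : E3 →L[ℝ] ℝ := ∑ β, (2:ℕ) • (innerSL ℝ (pdF P β x)).comp (D β) with hG'
  have hG : HasFDerivAt (fun y => gradSqF P y) G' x :=
    HasFDerivAt.fun_sum fun β _ => (hgd β).norm_sq
  have hΦd : ∀ α, HasFDerivAt (fun y => Φ y α)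
      ((fderivInnerCLM ℝ (pdF P α x, radDF P x)).comp ((D α).prod R')
        - ((2⁻¹ * gradSqF P x) • ((x α) • ((-(‖x‖^3)⁻¹) • innerSL ℝ x)
            + ‖x‖⁻¹ • (EuclideanSpace.proj α : E3 →L[ℝ] ℝ))
          + (x α * ‖x‖⁻¹) • ((2⁻¹:ℝ) • G'))) x := by
    intro α
    have he : (fun y => Φ y α)
        = fun y => ⟪pdF P α y, radDF P y⟫ - 2⁻¹ * gradSqF P y * (y α * ‖y‖⁻¹) := by
      funext y; rw [hΦ y α]; ring
    rw [he]
    have hA := (hgd α).inner ℝ hR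
    have hcm : HasFDerivAt (fun y : E3 => y α * ‖y‖⁻¹)
        ((x α) • ((-(‖x‖^3)⁻¹) • innerSL ℝ x) + ‖x‖⁻¹ • (EuclideanSpace.proj α : E3 →L[ℝ] ℝ)) x :=
      (EuclideanSpace.proj α : E3 →L[ℝ] ℝ).hasFDerivAt.mul hninv
    have hGhalf : HasFDerivAt (fun y => 2⁻¹ * gradSqF P y) ((2⁻¹:ℝ) • G') x :=
      hG.const_mul 2⁻¹
    have hB := hGhalf.mul hcm
    exact hA.sub hB
  have key : ∀ α, fderiv ℝ (fun y => Φ y α) x (v α)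
      = ⟪F'' (v α) (v α), radDF P x⟫ + ‖x‖⁻¹ * ⟪pdF P α x, pdF P α x⟫
        + ‖x‖⁻¹ * ∑ β, x β * ⟪pdF P α x, F'' (v α) (v β)⟫
        - (‖x‖^3)⁻¹ * (x α * ⟪pdF P α x, Sx⟫)
        - 2⁻¹ * gradSqF P x * (‖x‖⁻¹ - (‖x‖^3)⁻¹ * (x α * x α))
        - ‖x‖⁻¹ * (x α * ∑ β, ⟪pdF P β x, F'' (v α) (v β)⟫) := by
    intro α
    rw [(hΦd α).fderiv]
    simp only [ContinuousLinearMap.sub_apply, ContinuousLinearMap.add_apply,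
      ContinuousLinearMap.comp_apply, ContinuousLinearMap.prod_apply,
      ContinuousLinearMap.smul_apply, ContinuousLinearMap.smulRight_apply,
      ContinuousLinearMap.coe_smul', Pi.smul_apply, fderivInnerCLM_apply,
      innerSL_apply_apply, smul_eq_mul, ContinuousLinearMap.sum_apply, nsmul_eq_mul,
      ContinuousLinearMap.apply_apply, hR', hS', hG', hD,
      EuclideanSpace.inner_single_right, conj_trivial, one_mul,
      PiLp.proj_apply, EuclideanSpace.single_apply,
      inner_add_right, real_inner_smul_right, inner_sum,
      Finset.sum_add_distrib, ite_smul, one_smul, zero_smul, Finset.sum_ite_eq',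
      Finset.sum_ite_eq, ite_mul, mul_ite, one_mul, mul_one, zero_mul, mul_zero,
      Finset.mem_univ, if_true, Nat.cast_ofNat, hv]
    rw [← Finset.mul_sum]
    ring
  have hxx : ∑ α : Fin 3, x α * x α = ‖x‖ ^ 2 := by
    rw [← real_inner_self_eq_norm_sq]
    simp only [PiLp.inner_apply, RCLike.inner_apply, conj_trivial]
  have e1 : ∑ α, ⟪F'' (v α) (v α), radDF P x⟫ = ⟪lapF P x, radDF P x⟫ := by
    rw [hlap]; exact (sum_inner _ _ _).symm
  have e2 : ∑ α, ‖x‖⁻¹ * ⟪pdF P α x, pdF P α x⟫ = ‖x‖⁻¹ * gradSqF P x := by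
    rw [← Finset.mul_sum]
    congr 1
    exact Finset.sum_congr rfl fun α _ => real_inner_self_eq_norm_sq _
  have e4' : ∀ Z : EuclideanSpace ℝ (Fin m), (∑ α, x α * ⟪pdF P α x, Z⟫) = ⟪Sx, Z⟫ := by
    intro Z
    rw [hSx, sum_inner]
    exact Finset.sum_congr rfl fun α _ => (real_inner_smul_left _ _ _).symm
  have e4 : ∑ α, (‖x‖^3)⁻¹ * (x α * ⟪pdF P α x, Sx⟫) = (‖x‖^3)⁻¹ * ⟪Sx, Sx⟫ := by
    rw [← Finset.mul_sum]
    congr 1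
    exact e4' Sx
  have e3 : ∑ α, ‖x‖⁻¹ * ∑ β, x β * ⟪pdF P α x, F'' (v α) (v β)⟫
      = ∑ α, ‖x‖⁻¹ * (x α * ∑ β, ⟪pdF P β x, F'' (v α) (v β)⟫) := by
    rw [← Finset.mul_sum, ← Finset.mul_sum]
    congr 1
    rw [Finset.sum_comm]
    refine Finset.sum_congr rfl fun α _ => ?_
    rw [Finset.mul_sum]
    exact Finset.sum_congr rfl fun β _ => by rw [hsym β α]
  have e5 : ∑ α : Fin 3, 2⁻¹ * gradSqF P x * (‖x‖⁻¹ - (‖x‖^3)⁻¹ * (x α * x α))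
      = ‖x‖⁻¹ * gradSqF P x := by
    have h1 : ∑ α : Fin 3, 2⁻¹ * gradSqF P x * (‖x‖⁻¹ - (‖x‖^3)⁻¹ * (x α * x α))
        = (3:ℝ) * (2⁻¹ * gradSqF P x * ‖x‖⁻¹)
          - 2⁻¹ * gradSqF P x * (‖x‖^3)⁻¹ * ∑ α : Fin 3, x α * x α := by
      rw [Finset.mul_sum]
      rw [show (3:ℝ) * (2⁻¹ * gradSqF P x * ‖x‖⁻¹)
        = ∑ _α : Fin 3, 2⁻¹ * gradSqF P x * ‖x‖⁻¹ by
          simp [Finset.sum_const]]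
      rw [← Finset.sum_sub_distrib]
      exact Finset.sum_congr rfl fun α _ => by ring
    rw [h1, hxx]
    field_simp [hnx]
    ring
  have h6 : ‖x‖⁻¹ * ‖radDF P x‖ ^ 2 = (‖x‖^3)⁻¹ * ⟪Sx, Sx⟫ := by
    have hr : radDF P x = ‖x‖⁻¹ • Sx := rfl
    have h7 : ‖x‖⁻¹ * (‖x‖⁻¹)^2 = (‖x‖^3)⁻¹ := by
      rw [inv_pow, ← mul_inv]
      congr 1
      ring
    rw [hr, norm_smul, Real.norm_eq_abs, mul_pow, sq_abs, real_inner_self_eq_norm_sq,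
      ← h7]
    ring
  simp only [hv] at key
  simp only [key]
  rw [Finset.sum_sub_distrib, Finset.sum_sub_distrib, Finset.sum_sub_distrib,
    Finset.sum_add_distrib, Finset.sum_add_distrib, e1, e2, e3, e4, e5]
  linear_combination h6


end
end
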